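/- arXiv:1704.01836 — 2 statements merged into one kernel-verified Lean document; each statement's English description precedes it below -/
import Mathlib

section
/- Write the down-Laplacian L↓_1 of the complete 2-complex on 3m vertices by blocks according to binom(V,2) = X_1 ∪ (A×A ∪ B×B ∪ C×C), as L↓_1 = [[L↓_1(X), M],[Mᵀ, N]] where X = K²_{m,m,m}. Then MᵀM = 2m·N, and consequently the block matrix [[2m·I, −M],[−Mᵀ, 2m·I − N]] is positive semidefinite since m·I − N ⪰ 0 (N being block diagonal with three copies of L↓_1(K_m^2)). -/
open Finset Matrix

/-- The oriented incidence number `[F:K]` induced by the global linear order on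
the vertices: it is `(-1)^j` if `K ⊆ F`, `F ∖ K = {x_j}` and `x_j` is the `j`-th
smallest element of `F`, and `0` otherwise. -/
def inc {V : Type} [DecidableEq V] [LinearOrder V] (F K : Finset V) : ℝ :=
  if K ⊆ F ∧ F.card = K.card + 1 then
    ∑ x ∈ F \ K, (-1 : ℝ) ^ (K.filter (fun y => y < x)).card
  else 0

/-- An abstract simplicial complex on a vertex type `V`: a family of finite subsets
of `V` closed under taking subsets. -/
structure SC (V : Type) [DecidableEq V] where
  faces : Finset (Finset V)
  down_closed : ∀ ⦃F⦄, F ∈ faces → ∀ ⦃K : Finset V⦄, K ⊆ F → K ∈ faces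

variable {V : Type} [Fintype V] [DecidableEq V] [LinearOrder V]

/-- The faces of cardinality `m` (i.e. of dimension `m-1`) of a complex. -/
def SC.dfaces (X : SC V) (m : ℕ) : Finset (Finset V) := X.faces.filter fun F => F.card = m

/-- The faces of cardinality `m`, as a type (index set of the space `C^{m-1}` of
`(m-1)`-dimensional cochains). -/
abbrev Face (X : SC V) (m : ℕ) := {F : Finset V // F ∈ X.dfaces m}

/-- The matrix of the coboundary map `δ_{m-1}` from `(m-1)`-dimensional cochains
(functions on cardinality-`m` faces) to `m`-dimensional cochains, in the bases of
elementary cochains. -/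
def deltaMat (X : SC V) (m : ℕ) : Matrix (Face X (m + 1)) (Face X m) ℝ :=
  fun H F => inc H.1 F.1

/-- The up-Laplacian `L↑_{m-1} = ∂_m δ_{m-1}` acting on `(m-1)`-dimensional cochains,
where `∂ = δ*` is the adjoint (transpose) of the coboundary map. -/
def Lup (X : SC V) (m : ℕ) : Matrix (Face X m) (Face X m) ℝ :=
  (deltaMat X m)ᵀ * deltaMat X m

/-- The down-Laplacian `L↓_m = δ_{m-1} ∂_m` acting on `m`-dimensional cochains. -/
def Ldown (X : SC V) (m : ℕ) : Matrix (Face X (m + 1)) (Face X (m + 1)) ℝ :=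
  deltaMat X m * (deltaMat X m)ᵀ

/-- The space of harmonicSp `i`-cochains `H_i = Z_i ∩ Z^i = ker ∂_i ∩ ker δ_i`. -/
def harmonicSp (X : SC V) (i : ℕ) : Submodule ℝ (Face X (i + 1) → ℝ) :=
  LinearMap.ker (Matrix.mulVecLin (deltaMat X i)ᵀ) ⊓
    LinearMap.ker (Matrix.mulVecLin (deltaMat X (i + 1)))

/-- The type of all `k`-element subsets of `V`. -/
abbrev KSet (V : Type) [Fintype V] [DecidableEq V] (k : ℕ) := {F : Finset V // F.card = k}

/-- `ε_{F,F'} = [F : F ∩ F'] ⬝ [F' : F ∩ F']`. -/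
def eps {V : Type} [DecidableEq V] [LinearOrder V] (F F' : Finset V) : ℝ :=
  inc F (F ∩ F') * inc F' (F ∩ F')

/-- The down-Laplacian `L↓_{k-1}` of the complete complex `K_n^k`, as a matrix indexed
by all `k`-subsets of the vertex set: diagonal entries `k`, off-diagonal entries
`ε_{F,F'}` (which vanish unless `|F ∩ F'| = k-1`). -/
def Lc (V : Type) [Fintype V] [DecidableEq V] [LinearOrder V] (k : ℕ) :
    Matrix (KSet V k) (KSet V k) ℝ :=
  fun F F' => if F = F' then (k : ℝ) else eps F.1 F'.1

/-- `S` is an independent set of the pure `k`-dimensional complex `X`: it contains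
no `k`-dimensional face of `X`. -/
def SC.IsIndep (X : SC V) (k : ℕ) (S : Finset V) : Prop :=
  ∀ H ∈ X.dfaces (k + 1), ¬ H ⊆ S

/-- The independence number `α(X)` of a pure `k`-dimensional complex. -/
noncomputable def alphaNum (X : SC V) (k : ℕ) : ℕ :=
  sSup {m | ∃ S : Finset V, X.IsIndep k S ∧ S.card = m}

/-- `X` is a pure `k`-dimensional simplicial complex: all faces have dimension at
most `k` and every face is contained in a face of dimension `k`. -/
def SC.Pure (X : SC V) (k : ℕ) : Prop :=
  (∀ F ∈ X.faces, F.card ≤ k + 1) ∧ ∀ F ∈ X.faces, ∃ H ∈ X.dfaces (k + 1), F ⊆ H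

/-- Feasibility for the primal semidefinite program defining `ϑ_k(X)`. -/
def thetaFeasible (X : SC V) (k : ℕ) (Y : Matrix (KSet V k) (KSet V k) ℝ) : Prop :=
  Y.PosSemidef ∧ Matrix.trace Y = 1 ∧
  (∀ F F' : KSet V k, F.1 ∪ F'.1 ∈ X.dfaces (k + 1) → Y F F' = 0) ∧
  (∀ F F' : KSet V k, k + 2 ≤ (F.1 ∪ F'.1).card → Y F F' = 0) ∧
  (∀ F F' G G' : KSet V k, F.1 ∪ F'.1 = G.1 ∪ G'.1 →
    eps F.1 F'.1 * Y F F' = eps G.1 G'.1 * Y G G')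

/-- The theta number `ϑ_k(X)` of a pure `k`-dimensional simplicial complex: the optimal
value of the semidefinite program maximizing `⟨L↓_{k-1}, Y⟩` over feasible `Y`. -/
noncomputable def theta (X : SC V) (k : ℕ) : ℝ :=
  sSup {t | ∃ Y, thetaFeasible X k Y ∧ Matrix.trace (Lc V k * Y) = t}

/-- The complete `k`-dimensional complex on the vertex type `V`: all subsets of
cardinality at most `k+1` are faces. -/
def completeComplex (V : Type) [Fintype V] [DecidableEq V] (k : ℕ) : SC V :=
  ⟨univ.filter fun F => F.card ≤ k + 1, by
    intro F hF K hK
    simp only [mem_filter, mem_univ, true_and] at hF ⊢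
    exact le_trans (card_le_card hK) hF⟩

/-- The empty complex (no faces at all), conventionally pure of any dimension. -/
def emptyComplex (V : Type) [DecidableEq V] : SC V :=
  ⟨∅, by intro F hF; simp at hF⟩

/-- The largest eigenvalue of a matrix. -/
noncomputable def lambdaMax {ι : Type} [Fintype ι] (M : Matrix ι ι ℝ) : ℝ :=
  sSup {μ : ℝ | Module.End.HasEigenvalue (Matrix.mulVecLin M) μ}

/-- The smallest eigenvalue of a matrix. -/
noncomputable def lambdaMin {ι : Type} [Fintype ι] (M : Matrix ι ι ℝ) : ℝ :=
  sInf {μ : ℝ | Module.End.HasEigenvalue (Matrix.mulVecLin M) μ}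

/-- The degree of a face `F`: the number of faces of one higher dimension containing it. -/
def SC.deg (X : SC V) (F : Finset V) : ℕ :=
  ((X.dfaces (F.card + 1)).filter fun H => F ⊆ H).card

/-- The minimal degree of a `(k-1)`-dimensional face (a face of cardinality `k`). -/
noncomputable def degMin (X : SC V) (k : ℕ) : ℕ :=
  sInf {m | ∃ F ∈ X.dfaces k, m = X.deg F}

/-- The up-Laplacian `L↑_{k-1}(X)` extended by zeros to a matrix indexed by all
`k`-subsets of the vertex set. -/
def LupE (X : SC V) (k : ℕ) : Matrix (KSet V k) (KSet V k) ℝ :=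
  fun F F' => ∑ H ∈ X.dfaces (k + 1), inc H F.1 * inc H F'.1

/-- The down-Laplacian `L↓_{k-1}(X)` extended by zeros to a matrix indexed by all
`k`-subsets of the vertex set. -/
def LdownE (X : SC V) (k : ℕ) : Matrix (KSet V k) (KSet V k) ℝ :=
  fun F F' =>
    if F.1 ∈ X.faces ∧ F'.1 ∈ X.faces then ∑ K ∈ X.dfaces (k - 1), inc F.1 K * inc F'.1 K
    else 0

/-- The Lovász theta number of a graph given by an adjacency relation `adj` on a finite
vertex type, in its primal formulation. -/
noncomputable def thetaG {W : Type} [Fintype W] (adj : W → W → Prop) : ℝ :=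
  sSup {t | ∃ Z : Matrix W W ℝ, Z.PosSemidef ∧ Matrix.trace Z = 1 ∧
    (∀ v w, adj v w → Z v w = 0) ∧ t = ∑ v, ∑ w, Z v w}

/-- The complete tripartite 2-complex `K²_{m,m,m}` on `3m` vertices: the three parts are
the fibers of `v ↦ v / m`, the 2-faces are the triangles with one vertex in each part,
and the 1-faces are the edges with at most one vertex in each part. -/
def tripartite (m : ℕ) : SC (Fin (3 * m)) :=
  ⟨univ.filter fun F => F.card ≤ 3 ∧ ∀ v ∈ F, ∀ w ∈ F, v ≠ w → v.val / m ≠ w.val / m, by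
    intro F hF K hK
    simp only [mem_filter, mem_univ, true_and] at hF ⊢
    exact ⟨le_trans (card_le_card hK) hF.1,
      fun v hv w hw hvw => hF.2 v (hK hv) w (hK hw) hvw⟩⟩


section AuxTBI
set_option linter.unusedSectionVars false
variable {V : Type} [Fintype V] [DecidableEq V] [LinearOrder V]

lemma inc_not_mem {G : Finset V} {v : V} (h : v ∉ G) : inc G {v} = 0 := by
  rw [inc, if_neg]; rintro ⟨hs, -⟩; exact h (hs (mem_singleton_self v))

lemma pair_sdiff_left {a b : V} (hne : a ≠ b) : ({a,b} : Finset V) \ {a} = {b} := by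
  ext x
  simp only [mem_sdiff, mem_insert, mem_singleton]
  constructor
  · rintro ⟨h1 | h1, h2⟩ <;> simp_all
  · rintro rfl; exact ⟨Or.inr rfl, Ne.symm hne⟩

lemma pair_sdiff_right {a b : V} (hne : a ≠ b) : ({a,b} : Finset V) \ {b} = {a} := by
  ext x
  simp only [mem_sdiff, mem_insert, mem_singleton]
  constructor
  · rintro ⟨h1 | h1, h2⟩ <;> simp_all
  · rintro rfl; exact ⟨Or.inl rfl, hne⟩

lemma card_pair' {a b : V} (hne : a ≠ b) : ({a,b} : Finset V).card = 2 := by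
  rw [Finset.card_insert_of_notMem (by simp [hne]), Finset.card_singleton]

lemma inc_pair_left {a b : V} (h : a < b) : inc ({a,b} : Finset V) {a} = -1 := by
  rw [inc, if_pos ⟨by simp, by simp [card_pair' h.ne]⟩, pair_sdiff_left h.ne]
  simp [Finset.filter_singleton, h]

lemma inc_pair_right {a b : V} (h : a < b) : inc ({a,b} : Finset V) {b} = 1 := by
  rw [inc, if_pos ⟨by simp, by simp [card_pair' h.ne]⟩, pair_sdiff_right h.ne]
  simp [Finset.filter_singleton, not_lt.2 h.le]

lemma inc_mul_self {G : Finset V} (h2 : G.card = 2) {v : V} :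
    inc G {v} * inc G {v} = if v ∈ G then 1 else 0 := by
  split_ifs with hv
  · obtain ⟨a, b, hab, rfl⟩ := Finset.card_eq_two.1 h2
    rcases hab.lt_or_gt with h | h
    · rcases mem_insert.1 hv with rfl | hv
      · rw [inc_pair_left h]; ring
      · rw [mem_singleton.1 hv, inc_pair_right h]; ring
    · rw [show ({a,b} : Finset V) = {b,a} by rw [Finset.pair_comm]] at hv ⊢
      rcases mem_insert.1 hv with rfl | hv
      · rw [inc_pair_left h]; ring
      · rw [mem_singleton.1 hv, inc_pair_right h]; ring
  · rw [inc_not_mem hv]; ring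

lemma sum_inc_pair {G : Finset V} (h2 : G.card = 2) : ∑ v ∈ G, inc G {v} = 0 := by
  obtain ⟨a, b, hab, rfl⟩ := Finset.card_eq_two.1 h2
  rw [Finset.sum_pair hab]
  rcases hab.lt_or_gt with h | h
  · rw [inc_pair_left h, inc_pair_right h]; ring
  · rw [show ({a,b} : Finset V) = {b,a} by rw [Finset.pair_comm]]
    rw [inc_pair_left h, inc_pair_right h]; ring

lemma sum_inc_subset {G S : Finset V} (h2 : G.card = 2)
    (hc : ∀ a ∈ G, ∀ b ∈ G, (a ∈ S ↔ b ∈ S)) : ∑ w ∈ S, inc G {w} = 0 := by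
  have key : ∑ w ∈ S, inc G {w} = ∑ w ∈ S ∩ G, inc G {w} := by
    refine (Finset.sum_subset Finset.inter_subset_left fun x hx hnx => ?_).symm
    exact inc_not_mem fun hxG => hnx (Finset.mem_inter.2 ⟨hx, hxG⟩)
  rw [key]
  obtain ⟨a, b, hab, rfl⟩ := Finset.card_eq_two.1 h2
  by_cases ha : a ∈ S
  · have hb : b ∈ S := (hc a (by simp) b (by simp)).1 ha
    have hsub : ({a, b} : Finset V) ⊆ S := by
      intro x hx
      rcases Finset.mem_insert.1 hx with rfl | hx
      · exact ha
      · rw [Finset.mem_singleton.1 hx]; exact hb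
    rw [Finset.inter_eq_right.2 hsub]
    exact sum_inc_pair h2
  · have hb : b ∉ S := fun hb => ha ((hc a (by simp) b (by simp)).2 hb)
    have : S ∩ ({a, b} : Finset V) = ∅ := by
      ext x
      simp only [Finset.mem_inter, Finset.mem_insert, Finset.mem_singleton,
        Finset.notMem_empty, iff_false]
      rintro ⟨hxS, rfl | rfl⟩
      · exact ha hxS
      · exact hb hxS
    rw [this, Finset.sum_empty]

lemma inc_empty {G : Finset V} (h2 : G.card = 2) : inc G ∅ = 0 := by
  rw [inc, if_neg]; simp [h2]


lemma Lc_eq_sum (F G : KSet V 2) :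
    Lc V 2 F G = ∑ v, inc F.1 {v} * inc G.1 {v} := by
  have hF := F.2
  have hG := G.2
  have key : ∑ v, inc F.1 {v} * inc G.1 {v} = ∑ v ∈ F.1 ∩ G.1, inc F.1 {v} * inc G.1 {v} := by
    refine (Finset.sum_subset (Finset.subset_univ _) fun x _ hx => ?_).symm
    by_cases hxF : x ∈ F.1
    · have hxG : x ∉ G.1 := fun hxG => hx (Finset.mem_inter.2 ⟨hxF, hxG⟩)
      rw [inc_not_mem hxG, mul_zero]
    · rw [inc_not_mem hxF, zero_mul]
  by_cases hFG : F = G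
  · subst hFG
    rw [Lc, if_pos rfl, key, Finset.inter_self]
    have : ∀ v ∈ F.1, inc F.1 {v} * inc F.1 {v} = 1 := fun v hv => by
      rw [inc_mul_self hF, if_pos hv]
    rw [Finset.sum_congr rfl this, Finset.sum_const, hF]
    norm_num
  · rw [Lc, if_neg hFG, key]
    rcases Nat.lt_or_ge (F.1 ∩ G.1).card 2 with hlt | hge
    · interval_cases h1 : (F.1 ∩ G.1).card
      · rw [Finset.card_eq_zero.1 h1, eps, Finset.card_eq_zero.1 h1, inc_empty hF,
          Finset.sum_empty, zero_mul]
      · obtain ⟨c, hc⟩ := Finset.card_eq_one.1 h1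
        rw [hc, eps, hc, Finset.sum_singleton]
    · exfalso
      apply hFG
      have h1 : F.1 ∩ G.1 = F.1 :=
        Finset.eq_of_subset_of_card_le Finset.inter_subset_left (by rw [hF]; exact hge)
      have h2 : F.1 ∩ G.1 = G.1 :=
        Finset.eq_of_subset_of_card_le Finset.inter_subset_right (by rw [hG]; exact hge)
      exact Subtype.ext (h1 ▸ h2)

end AuxTBI

section
variable {m : ℕ} (hm : 1 ≤ m)

lemma card_part (hm : 1 ≤ m) (v : Fin (3*m)) :
    ((univ : Finset (Fin (3*m))).filter fun w => w.val / m = v.val / m).card = m := by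
  have hm0 : 0 < m := hm
  refine Eq.trans ?_ (Finset.card_range m)
  apply Finset.card_nbij' (i := fun w => w.val % m)
    (j := fun i => ⟨v.val / m * m + i % m, by
      have h3 : v.val / m < 3 := (Nat.div_lt_iff_lt_mul hm0).2 v.2
      have := Nat.mod_lt i hm0
      nlinarith [Nat.mod_lt i hm0]⟩)
  · intro w hw
    exact Finset.mem_range.2 (Nat.mod_lt _ hm0)
  · intro i hi
    simp only [Finset.coe_filter, Set.mem_setOf_eq, Finset.mem_filter, Finset.mem_univ, true_and]
    have hi' : i % m = i := Nat.mod_eq_of_lt (Finset.mem_range.1 hi)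
    rw [hi']
    rw [Nat.add_comm, Nat.add_mul_div_right _ _ hm0,
      Nat.div_eq_of_lt (Finset.mem_range.1 hi), Nat.zero_add]
  · intro w hw
    simp only [Finset.coe_filter, Set.mem_setOf_eq, Finset.mem_filter, Finset.mem_univ, true_and] at hw
    ext
    show v.val / m * m + w.val % m % m = w.val
    rw [show w.val % m % m = w.val % m from Nat.mod_eq_of_lt (Nat.mod_lt _ hm0),
      ← hw, mul_comm, Nat.div_add_mod]
  · intro i hi
    have hi' : i % m = i := Nat.mod_eq_of_lt (Finset.mem_range.1 hi)
    show (v.val / m * m + i % m) % m = i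
    rw [hi', mul_comm, Nat.mul_add_mod, hi']

lemma card_part_ne (hm : 1 ≤ m) (v : Fin (3*m)) :
    ((univ : Finset (Fin (3*m))).filter fun w => w.val / m ≠ v.val / m).card = 2 * m := by
  have hsd : ((univ : Finset (Fin (3*m))).filter fun w => w.val / m ≠ v.val / m)
      = univ \ univ.filter (fun u : Fin (3*m) => u.val / m = v.val / m) := by
    ext w; simp [Finset.mem_sdiff]
  rw [hsd, Finset.card_sdiff_of_subset (Finset.filter_subset _ _),
    Finset.card_univ, Fintype.card_fin, card_part hm v]
  omega

lemma pair_mem_faces {v w : Fin (3*m)} (hvw : v ≠ w) :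
    ({v,w} : Finset (Fin (3*m))) ∈ (tripartite m).faces ↔ v.val / m ≠ w.val / m := by
  simp only [tripartite, Finset.mem_filter, Finset.mem_univ, true_and]
  constructor
  · rintro ⟨-, h⟩
    exact h v (by simp) w (by simp) hvw
  · intro h
    refine ⟨by rw [card_pair' hvw]; omega, ?_⟩
    intro x hx y hy hxy
    simp only [Finset.mem_insert, Finset.mem_singleton] at hx hy
    rcases hx with rfl | rfl <;> rcases hy with rfl | rfl
    · exact absurd rfl hxy
    · exact h
    · exact fun hh => h hh.symm
    · exact absurd rfl hxy

end


section CountTBI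

variable {m : ℕ}

/-- Bichromatic edges of the tripartite complex, as a finset of finsets. -/
def EBs (m : ℕ) : Finset (Finset (Fin (3*m))) :=
  ((univ : Finset (Fin (3*m))).powersetCard 2).filter (· ∈ (tripartite m).faces)

/-- Monochromatic (non-face) pairs, as a finset of finsets. -/
def ENs (m : ℕ) : Finset (Finset (Fin (3*m))) :=
  ((univ : Finset (Fin (3*m))).powersetCard 2).filter (· ∉ (tripartite m).faces)

lemma mem_EBs {F : Finset (Fin (3*m))} :
    F ∈ EBs m ↔ F.card = 2 ∧ F ∈ (tripartite m).faces := by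
  simp [EBs, Finset.mem_powersetCard, Finset.subset_univ]

lemma mem_ENs {F : Finset (Fin (3*m))} :
    F ∈ ENs m ↔ F.card = 2 ∧ F ∉ (tripartite m).faces := by
  simp [ENs, Finset.mem_powersetCard, Finset.subset_univ]

lemma pair_of_mem {F : Finset (Fin (3*m))} (h2 : F.card = 2) {v : Fin (3*m)}
    (hv : v ∈ F) : ∃ w, w ≠ v ∧ F = {v, w} := by
  obtain ⟨a, b, hab, rfl⟩ := Finset.card_eq_two.1 h2
  simp only [Finset.mem_insert, Finset.mem_singleton] at hv
  rcases hv with rfl | rfl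
  · exact ⟨b, hab.symm, rfl⟩
  · exact ⟨a, hab, Finset.pair_comm a v⟩

lemma inc_pair_mul {a b : Fin (3*m)} (hab : a ≠ b) :
    inc ({a,b} : Finset (Fin (3*m))) {a} * inc ({a,b} : Finset (Fin (3*m))) {b} = -1 := by
  rcases hab.lt_or_gt with h | h
  · rw [inc_pair_left h, inc_pair_right h]; ring
  · rw [Finset.pair_comm a b, inc_pair_left h, inc_pair_right h]; ring

lemma sum_sq_card (E : Finset (Finset (Fin (3*m)))) (hE : ∀ F ∈ E, F.card = 2)
    (v : Fin (3*m)) :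
    ∑ F ∈ E, inc F {v} * inc F {v} = ((E.filter fun F => v ∈ F).card : ℝ) := by
  rw [← Finset.sum_boole]
  exact Finset.sum_congr rfl fun F hF => inc_mul_self (hE F hF)

lemma sum_offdiag (E : Finset (Finset (Fin (3*m)))) (hE : ∀ F ∈ E, F.card = 2)
    {v w : Fin (3*m)} (hvw : v ≠ w) :
    ∑ F ∈ E, inc F {v} * inc F {w}
      = if ({v,w} : Finset (Fin (3*m))) ∈ E then -1 else 0 := by
  have hvan : ∀ F ∈ E, F ≠ ({v,w} : Finset (Fin (3*m))) → inc F {v} * inc F {w} = 0 := by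
    intro F hF hne
    by_cases hvF : v ∈ F
    · by_cases hwF : w ∈ F
      · exfalso
        apply hne
        refine (Finset.eq_of_subset_of_card_le ?_ ?_).symm
        · intro x hx
          simp only [Finset.mem_insert, Finset.mem_singleton] at hx
          rcases hx with rfl | rfl
          · exact hvF
          · exact hwF
        · rw [hE F hF, card_pair' hvw]
      · rw [inc_not_mem hwF, mul_zero]
    · rw [inc_not_mem hvF, zero_mul]
  split_ifs with hmem
  · rw [Finset.sum_eq_single_of_mem _ hmem hvan]
    exact inc_pair_mul hvw
  · exact Finset.sum_eq_zero fun F hF => hvan F hF fun h => hmem (h ▸ hF)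

lemma card_EBs_filter (hm : 1 ≤ m) (v : Fin (3*m)) :
    ((EBs m).filter fun F => v ∈ F).card = 2 * m := by
  rw [← card_part_ne hm v]
  refine (Finset.card_nbij (fun w => ({v, w} : Finset (Fin (3*m)))) ?_ ?_ ?_).symm
  · intro w hw
    simp only [Finset.coe_filter, Set.mem_setOf_eq, Finset.mem_filter, Finset.mem_univ, true_and] at hw
    have hvw : v ≠ w := fun h => hw (h ▸ rfl)
    refine Finset.mem_filter.2 ⟨mem_EBs.2 ⟨card_pair' hvw, (pair_mem_faces hvw).2 fun h => hw h.symm⟩, by simp⟩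
  · intro w hw w' hw' h
    simp only [Finset.coe_filter, Set.mem_setOf_eq, Finset.mem_univ, true_and] at hw hw'
    have h' : ({v, w} : Finset (Fin (3*m))) = {v, w'} := h
    have : w ∈ ({v, w'} : Finset (Fin (3*m))) := h' ▸ (by simp : w ∈ ({v, w} : Finset (Fin (3*m))))
    simp only [Finset.mem_insert, Finset.mem_singleton] at this
    rcases this with rfl | rfl
    · exact absurd rfl hw
    · rfl
  · intro F hF
    simp only [Finset.coe_filter, Set.mem_setOf_eq] at hF
    obtain ⟨hFE, hvF⟩ := hF
    obtain ⟨h2, hfaces⟩ := mem_EBs.1 hFE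
    obtain ⟨w, hwv, rfl⟩ := pair_of_mem h2 hvF
    refine ⟨w, ?_, rfl⟩
    simp only [Finset.coe_filter, Set.mem_setOf_eq, Finset.mem_univ, true_and]
    exact fun h => ((pair_mem_faces hwv.symm).1 hfaces) h.symm

lemma card_ENs_filter (hm : 1 ≤ m) (v : Fin (3*m)) :
    ((ENs m).filter fun F => v ∈ F).card = m - 1 := by
  have hcs : ((univ : Finset (Fin (3*m))).filter fun w => w.val / m = v.val / m ∧ w ≠ v).card
      = m - 1 := by
    have heq : ((univ : Finset (Fin (3*m))).filter fun w => w.val / m = v.val / m ∧ w ≠ v)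
        = ((univ : Finset (Fin (3*m))).filter fun w => w.val / m = v.val / m).erase v := by
      ext w
      simp only [Finset.mem_filter, Finset.mem_univ, true_and, Finset.mem_erase]
      tauto
    rw [heq, Finset.card_erase_of_mem (by simp), card_part hm v]
  rw [← hcs]
  refine (Finset.card_nbij (fun w => ({v, w} : Finset (Fin (3*m)))) ?_ ?_ ?_).symm
  · intro w hw
    simp only [Finset.coe_filter, Set.mem_setOf_eq, Finset.mem_filter, Finset.mem_univ, true_and] at hw
    have hvw : v ≠ w := fun h => hw.2 h.symm
    refine Finset.mem_filter.2 ⟨mem_ENs.2 ⟨card_pair' hvw, ?_⟩, by simp⟩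
    rw [pair_mem_faces hvw]
    exact fun h => h hw.1.symm
  · intro w hw w' hw' h
    simp only [Finset.coe_filter, Set.mem_setOf_eq, Finset.mem_univ, true_and] at hw hw'
    have h' : ({v, w} : Finset (Fin (3*m))) = {v, w'} := h
    have : w ∈ ({v, w'} : Finset (Fin (3*m))) := h' ▸ (by simp : w ∈ ({v, w} : Finset (Fin (3*m))))
    simp only [Finset.mem_insert, Finset.mem_singleton] at this
    rcases this with rfl | rfl
    · exact absurd rfl hw.2
    · rfl
  · intro F hF
    simp only [Finset.coe_filter, Set.mem_setOf_eq] at hF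
    obtain ⟨hFE, hvF⟩ := hF
    obtain ⟨h2, hfaces⟩ := mem_ENs.1 hFE
    obtain ⟨w, hwv, rfl⟩ := pair_of_mem h2 hvF
    refine ⟨w, ?_, rfl⟩
    simp only [Finset.coe_filter, Set.mem_setOf_eq, Finset.mem_univ, true_and]
    constructor
    · by_contra h
      exact hfaces ((pair_mem_faces hwv.symm).2 fun hh => h hh.symm)
    · exact hwv

lemma CB (hm : 1 ≤ m) (v w : Fin (3*m)) :
    ∑ F ∈ EBs m, inc F {v} * inc F {w}
      = (if v = w then 2*(m:ℝ) else 0) + (if v.val / m ≠ w.val / m then -1 else 0) := by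
  by_cases hvw : v = w
  · subst hvw
    rw [sum_sq_card _ (fun F hF => (mem_EBs.1 hF).1) v, card_EBs_filter hm v]
    simp
  · rw [sum_offdiag _ (fun F hF => (mem_EBs.1 hF).1) hvw, if_neg hvw]
    have : (({v,w} : Finset (Fin (3*m))) ∈ EBs m) ↔ v.val / m ≠ w.val / m := by
      rw [mem_EBs, pair_mem_faces hvw]
      exact ⟨fun h => h.2, fun h => ⟨card_pair' hvw, h⟩⟩
    by_cases hp : v.val / m ≠ w.val / m
    · rw [if_pos (this.2 hp), if_pos hp, zero_add]
    · rw [if_neg (fun h => hp (this.1 h)), if_neg hp, zero_add]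

lemma CN (hm : 1 ≤ m) (v w : Fin (3*m)) :
    ∑ F ∈ ENs m, inc F {v} * inc F {w}
      = (if v = w then (m:ℝ) else 0) + (if v.val / m = w.val / m then -1 else 0) := by
  by_cases hvw : v = w
  · subst hvw
    rw [sum_sq_card _ (fun F hF => (mem_ENs.1 hF).1) v, card_ENs_filter hm v]
    rw [if_pos rfl, if_pos rfl, Nat.cast_sub hm]
    push_cast
    ring
  · rw [sum_offdiag _ (fun F hF => (mem_ENs.1 hF).1) hvw, if_neg hvw, zero_add]
    have : (({v,w} : Finset (Fin (3*m))) ∈ ENs m) ↔ v.val / m = w.val / m := by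
      rw [mem_ENs, pair_mem_faces hvw]
      constructor
      · intro h
        by_contra hne
        exact h.2 hne
      · exact fun h => ⟨card_pair' hvw, fun hc => hc h⟩
    by_cases hp : v.val / m = w.val / m
    · rw [if_pos (this.2 hp), if_pos hp]
    · rw [if_neg (fun h => hp (this.1 h)), if_neg hp]

end CountTBI


section KeyTBI
variable {m : ℕ}

lemma mono_parts {G : Finset (Fin (3*m))} (h2 : G.card = 2)
    (hmono : G ∉ (tripartite m).faces) :
    ∀ x ∈ G, ∀ y ∈ G, x.val / m = y.val / m := by
  obtain ⟨a, b, hab, rfl⟩ := Finset.card_eq_two.1 h2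
  have hpart : a.val / m = b.val / m := by
    by_contra h
    exact hmono ((pair_mem_faces hab).2 h)
  intro x hx y hy
  simp only [Finset.mem_insert, Finset.mem_singleton] at hx hy
  rcases hx with rfl | rfl <;> rcases hy with rfl | rfl
  · rfl
  · exact hpart
  · exact hpart.symm
  · rfl

lemma key_sum (t : ℝ) (p : Fin (3*m) → Prop) [DecidablePred p]
    {G : Finset (Fin (3*m))} (h2 : G.card = 2)
    (hconst : ∀ x ∈ G, ∀ y ∈ G, (p x ↔ p y)) (v : Fin (3*m)) :
    ∑ w, ((if v = w then t else 0) + (if p w then -1 else 0)) * inc G {w}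
      = t * inc G {v} := by
  have hsplit : ∀ w : Fin (3*m),
      ((if v = w then t else 0) + (if p w then -1 else 0)) * inc G {w}
        = (if v = w then t * inc G {w} else 0) + (if p w then -(inc G {w}) else 0) := by
    intro w
    split_ifs <;> ring
  rw [Finset.sum_congr rfl fun w _ => hsplit w, Finset.sum_add_distrib]
  have h1 : ∑ w, (if v = w then t * inc G {w} else 0) = t * inc G {v} := by
    rw [Finset.sum_ite_eq]
    simp
  have h2' : ∑ w, (if p w then -(inc G {w}) else 0) = 0 := by
    rw [← Finset.sum_filter, Finset.sum_neg_distrib, neg_eq_zero]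
    apply sum_inc_subset h2
    intro a ha b hb
    simp only [Finset.mem_filter, Finset.mem_univ, true_and]
    exact hconst a ha b hb
  rw [h1, h2', add_zero]

lemma sum_mul_sum_swap (E : Finset (Finset (Fin (3*m))))
    (x y : Fin (3*m) → ℝ) (f : Finset (Fin (3*m)) → Fin (3*m) → ℝ) :
    ∑ F ∈ E, (∑ v, x v * f F v) * (∑ w, y w * f F w)
      = ∑ v, x v * ∑ w, (∑ F ∈ E, f F v * f F w) * y w := by
  calc ∑ F ∈ E, (∑ v, x v * f F v) * (∑ w, y w * f F w)
      = ∑ F ∈ E, ∑ v, ∑ w, x v * f F v * (y w * f F w) := by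
        refine Finset.sum_congr rfl fun F _ => ?_
        rw [Finset.sum_mul_sum]
    _ = ∑ v, ∑ F ∈ E, ∑ w, x v * f F v * (y w * f F w) := Finset.sum_comm
    _ = ∑ v, ∑ w, ∑ F ∈ E, x v * f F v * (y w * f F w) := by
        exact Finset.sum_congr rfl fun v _ => Finset.sum_comm
    _ = ∑ v, x v * ∑ w, (∑ F ∈ E, f F v * f F w) * y w := by
        refine Finset.sum_congr rfl fun v _ => ?_
        rw [Finset.mul_sum]
        refine Finset.sum_congr rfl fun w _ => ?_
        rw [Finset.sum_mul, Finset.mul_sum]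
        exact Finset.sum_congr rfl fun F _ => by ring

lemma sum_subtype_EBs (g : Finset (Fin (3*m)) → ℝ) :
    ∑ F : {F : KSet (Fin (3*m)) 2 // F.1 ∈ (tripartite m).faces}, g F.1.1
      = ∑ F ∈ EBs m, g F := by
  refine Finset.sum_bij (fun F _ => F.1.1) ?_ ?_ ?_ ?_
  · intro F _
    exact mem_EBs.2 ⟨F.1.2, F.2⟩
  · intro F _ F' _ h
    exact Subtype.ext (Subtype.ext h)
  · intro F hF
    obtain ⟨h2, hf⟩ := mem_EBs.1 hF
    exact ⟨⟨⟨F, h2⟩, hf⟩, Finset.mem_univ _, rfl⟩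
  · intro F _
    rfl

lemma sum_subtype_ENs (g : Finset (Fin (3*m)) → ℝ) :
    ∑ F : {F : KSet (Fin (3*m)) 2 // F.1 ∉ (tripartite m).faces}, g F.1.1
      = ∑ F ∈ ENs m, g F := by
  refine Finset.sum_bij (fun F _ => F.1.1) ?_ ?_ ?_ ?_
  · intro F _
    exact mem_ENs.2 ⟨F.1.2, F.2⟩
  · intro F _ F' _ h
    exact Subtype.ext (Subtype.ext h)
  · intro F hF
    obtain ⟨h2, hf⟩ := mem_ENs.1 hF
    exact ⟨⟨⟨F, h2⟩, hf⟩, Finset.mem_univ _, rfl⟩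
  · intro F _
    rfl

end KeyTBI


lemma psd_of_sq {n : Type} [Fintype n] [DecidableEq n] (A : Matrix n n ℝ) (t : ℝ)
    (ht : 0 < t) (hsym : Aᵀ = A) (hsq : A * A = t • A) : A.PosSemidef := by
  have hc : Real.sqrt t⁻¹ * Real.sqrt t⁻¹ = t⁻¹ := Real.mul_self_sqrt (inv_nonneg.2 ht.le)
  have h1 : (Real.sqrt t⁻¹ • A) * (Real.sqrt t⁻¹ • A)ᴴ = A := by
    rw [Matrix.conjTranspose_eq_transpose_of_trivial, Matrix.transpose_smul, hsym,
      Matrix.smul_mul, Matrix.mul_smul, hsq, smul_smul, smul_smul, hc,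
      inv_mul_cancel₀ ht.ne', one_smul]
  exact h1 ▸ Matrix.posSemidef_self_mul_conjTranspose _

set_option maxHeartbeats 1600000 in
/-- Writing the down-Laplacian `L↓_1` of the complete 2-complex on
`3m` vertices in blocks according to the partition of the 2-subsets into the edges of
`X = K²_{m,m,m}` and the remaining (monochromatic) pairs, as
`L↓_1 = [[L↓_1(X), M],[Mᵀ, N]]`, one has `MᵀM = 2m·N`; consequently the block matrix
`[[2m·I, −M],[−Mᵀ, 2m·I − N]]` is positive semidefinite, since `m·I − N ⪰ 0`. -/
theorem tripartite_block_identity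
    (m : ℕ) (hm : 1 ≤ m)
    (M : Matrix {F : KSet (Fin (3 * m)) 2 // F.1 ∈ (tripartite m).faces}
                {F : KSet (Fin (3 * m)) 2 // F.1 ∉ (tripartite m).faces} ℝ)
    (hM : ∀ F G, M F G = Lc (Fin (3 * m)) 2 F.1 G.1)
    (N : Matrix {F : KSet (Fin (3 * m)) 2 // F.1 ∉ (tripartite m).faces}
                {F : KSet (Fin (3 * m)) 2 // F.1 ∉ (tripartite m).faces} ℝ)
    (hN : ∀ F G, N F G = Lc (Fin (3 * m)) 2 F.1 G.1) :
    Mᵀ * M = (2 * (m : ℝ)) • N ∧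
    (Matrix.fromBlocks ((2 * (m : ℝ)) • 1) (-M) (-Mᵀ) ((2 * (m : ℝ)) • 1 - N)).PosSemidef ∧
    ((m : ℝ) • 1 - N).PosSemidef := by
  classical
  have hmR : (0:ℝ) < m := by exact_mod_cast hm
  -- Part 1 : MᵀM = 2m • N
  have hMtM : Mᵀ * M = (2 * (m : ℝ)) • N := by
    ext G G'
    rw [Matrix.mul_apply]
    simp only [Matrix.transpose_apply, Matrix.smul_apply, smul_eq_mul]
    have hMsum : ∀ (F : {F : KSet (Fin (3*m)) 2 // F.1 ∈ (tripartite m).faces})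
        (G0 : {F : KSet (Fin (3*m)) 2 // F.1 ∉ (tripartite m).faces}),
        M F G0 = ∑ v, inc G0.1.1 {v} * inc F.1.1 {v} := by
      intro F G0
      rw [hM, Lc_eq_sum]
      exact Finset.sum_congr rfl fun v _ => mul_comm _ _
    calc ∑ F, M F G * M F G'
        = ∑ F : {F : KSet (Fin (3*m)) 2 // F.1 ∈ (tripartite m).faces},
            (∑ v, inc G.1.1 {v} * inc F.1.1 {v}) * (∑ w, inc G'.1.1 {w} * inc F.1.1 {w}) :=
          Finset.sum_congr rfl fun F _ => by rw [hMsum F G, hMsum F G']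
      _ = ∑ F ∈ EBs m, (∑ v, inc G.1.1 {v} * inc F {v}) * (∑ w, inc G'.1.1 {w} * inc F {w}) :=
          sum_subtype_EBs (fun A => (∑ v, inc G.1.1 {v} * inc A {v}) * (∑ w, inc G'.1.1 {w} * inc A {w}))
      _ = ∑ v, inc G.1.1 {v} * ∑ w, (∑ F ∈ EBs m, inc F {v} * inc F {w}) * inc G'.1.1 {w} :=
          sum_mul_sum_swap _ _ _ (fun F v => inc F {v})
      _ = ∑ v, inc G.1.1 {v} * (2*(m:ℝ) * inc G'.1.1 {v}) := by
          refine Finset.sum_congr rfl fun v _ => ?_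
          congr 1
          rw [Finset.sum_congr rfl fun w (_ : w ∈ univ) => by rw [CB hm v w]]
          exact key_sum (2*(m:ℝ)) (fun w => v.val / m ≠ w.val / m) G'.1.2
            (fun x hx y hy => by simp only [mono_parts G'.1.2 G'.2 x hx y hy]) v
      _ = 2*(m:ℝ) * ∑ v, inc G.1.1 {v} * inc G'.1.1 {v} := by
          rw [Finset.mul_sum]
          exact Finset.sum_congr rfl fun v _ => by ring
      _ = 2*(m:ℝ) * N G G' := by rw [hN G G', Lc_eq_sum]
  -- N * N = m • N
  have hNN : N * N = (m : ℝ) • N := by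
    ext G G'
    rw [Matrix.mul_apply]
    simp only [Matrix.smul_apply, smul_eq_mul]
    have hNsum1 : ∀ (K : {F : KSet (Fin (3*m)) 2 // F.1 ∉ (tripartite m).faces}),
        N G K = ∑ v, inc G.1.1 {v} * inc K.1.1 {v} := fun K => by rw [hN, Lc_eq_sum]
    have hNsum2 : ∀ (K : {F : KSet (Fin (3*m)) 2 // F.1 ∉ (tripartite m).faces}),
        N K G' = ∑ w, inc G'.1.1 {w} * inc K.1.1 {w} := by
      intro K
      rw [hN, Lc_eq_sum]
      exact Finset.sum_congr rfl fun w _ => mul_comm _ _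
    calc ∑ K, N G K * N K G'
        = ∑ K : {F : KSet (Fin (3*m)) 2 // F.1 ∉ (tripartite m).faces},
            (∑ v, inc G.1.1 {v} * inc K.1.1 {v}) * (∑ w, inc G'.1.1 {w} * inc K.1.1 {w}) :=
          Finset.sum_congr rfl fun K _ => by rw [hNsum1 K, hNsum2 K]
      _ = ∑ K ∈ ENs m, (∑ v, inc G.1.1 {v} * inc K {v}) * (∑ w, inc G'.1.1 {w} * inc K {w}) :=
          sum_subtype_ENs (fun A => (∑ v, inc G.1.1 {v} * inc A {v}) * (∑ w, inc G'.1.1 {w} * inc A {w}))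
      _ = ∑ v, inc G.1.1 {v} * ∑ w, (∑ K ∈ ENs m, inc K {v} * inc K {w}) * inc G'.1.1 {w} :=
          sum_mul_sum_swap _ _ _ (fun F v => inc F {v})
      _ = ∑ v, inc G.1.1 {v} * ((m:ℝ) * inc G'.1.1 {v}) := by
          refine Finset.sum_congr rfl fun v _ => ?_
          congr 1
          rw [Finset.sum_congr rfl fun w (_ : w ∈ univ) => by rw [CN hm v w]]
          exact key_sum ((m:ℝ)) (fun w => v.val / m = w.val / m) G'.1.2
            (fun x hx y hy => by simp only [mono_parts G'.1.2 G'.2 x hx y hy]) v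
      _ = (m:ℝ) * ∑ v, inc G.1.1 {v} * inc G'.1.1 {v} := by
          rw [Finset.mul_sum]
          exact Finset.sum_congr rfl fun v _ => by ring
      _ = (m:ℝ) * N G G' := by rw [hN G G', Lc_eq_sum]
  -- symmetry of N
  have hNT : Nᵀ = N := by
    ext G G'
    rw [Matrix.transpose_apply, hN, hN, Lc_eq_sum, Lc_eq_sum]
    exact Finset.sum_congr rfl fun v _ => mul_comm _ _
  -- m•1 - N is PSD
  have hAT : ((m:ℝ) • 1 - N)ᵀ = (m:ℝ) • 1 - N := by
    rw [Matrix.transpose_sub, Matrix.transpose_smul, Matrix.transpose_one, hNT]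
  have hsq : ((m:ℝ) • 1 - N) * ((m:ℝ) • 1 - N) = (m:ℝ) • ((m:ℝ) • 1 - N) := by
    simp only [Matrix.sub_mul, Matrix.mul_sub, Matrix.smul_mul, Matrix.mul_smul,
      Matrix.one_mul, Matrix.mul_one, hNN, smul_sub, smul_smul]
    abel
  have hP3 : ((m:ℝ) • 1 - N).PosSemidef := psd_of_sq _ (m:ℝ) hmR hAT hsq
  refine ⟨hMtM, ?_, hP3⟩
  -- Part 2
  set a : ℝ := Real.sqrt (2 * (m:ℝ)) with ha_def
  have h2m : (0:ℝ) < 2 * m := by linarith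
  have ha2 : a * a = 2 * (m:ℝ) := Real.mul_self_sqrt h2m.le
  have ha0 : a ≠ 0 := by
    intro h
    rw [h, mul_zero] at ha2
    linarith
  set b : ℝ := Real.sqrt (2 * (m:ℝ)⁻¹) with hb_def
  have hb2 : b * b = 2 * (m:ℝ)⁻¹ := Real.mul_self_sqrt (by positivity)
  set X : Matrix {F : KSet (Fin (3*m)) 2 // F.1 ∉ (tripartite m).faces}
      {F : KSet (Fin (3*m)) 2 // F.1 ∉ (tripartite m).faces} ℝ := (m:ℝ) • 1 - N with hX_def
  set C := Matrix.fromBlocks (a • (1 : Matrix {F : KSet (Fin (3*m)) 2 // F.1 ∈ (tripartite m).faces} {F : KSet (Fin (3*m)) 2 // F.1 ∈ (tripartite m).faces} ℝ))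
      (0 : Matrix {F : KSet (Fin (3*m)) 2 // F.1 ∈ (tripartite m).faces} {F : KSet (Fin (3*m)) 2 // F.1 ∉ (tripartite m).faces} ℝ)
      ((-(a⁻¹)) • Mᵀ)
      (0 : Matrix {F : KSet (Fin (3*m)) 2 // F.1 ∉ (tripartite m).faces} {F : KSet (Fin (3*m)) 2 // F.1 ∉ (tripartite m).faces} ℝ) with hC_def
  set E := Matrix.fromBlocks
      (0 : Matrix {F : KSet (Fin (3*m)) 2 // F.1 ∈ (tripartite m).faces} {F : KSet (Fin (3*m)) 2 // F.1 ∈ (tripartite m).faces} ℝ)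
      (0 : Matrix {F : KSet (Fin (3*m)) 2 // F.1 ∈ (tripartite m).faces} {F : KSet (Fin (3*m)) 2 // F.1 ∉ (tripartite m).faces} ℝ)
      (0 : Matrix {F : KSet (Fin (3*m)) 2 // F.1 ∉ (tripartite m).faces} {F : KSet (Fin (3*m)) 2 // F.1 ∈ (tripartite m).faces} ℝ)
      (b • X) with hE_def
  have hCCT : C * Cᴴ = Matrix.fromBlocks ((2*(m:ℝ)) • 1) (-M) (-Mᵀ) N := by
    rw [hC_def, Matrix.conjTranspose_eq_transpose_of_trivial, Matrix.fromBlocks_transpose,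
      Matrix.fromBlocks_multiply]
    simp only [Matrix.transpose_zero, Matrix.transpose_smul, Matrix.transpose_one,
      Matrix.transpose_transpose, Matrix.zero_mul, Matrix.mul_zero, add_zero, zero_add,
      Matrix.smul_mul, Matrix.mul_smul, Matrix.one_mul, Matrix.mul_one, smul_smul, hMtM]
    rw [show (-a⁻¹ * a : ℝ) = -1 by rw [neg_mul, inv_mul_cancel₀ ha0],
      show (a * -a⁻¹ : ℝ) = -1 by rw [mul_neg, mul_inv_cancel₀ ha0],
      show (-a⁻¹ * (-a⁻¹ * (2 * (m:ℝ))) : ℝ) = 1 by rw [← ha2]; field_simp,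
      one_smul, neg_smul, neg_smul, one_smul, one_smul, ha2]
  have hEET : E * Eᴴ = Matrix.fromBlocks 0 0 0 ((2:ℝ) • X) := by
    rw [hE_def, Matrix.conjTranspose_eq_transpose_of_trivial, Matrix.fromBlocks_transpose,
      Matrix.fromBlocks_multiply]
    simp only [Matrix.transpose_zero, Matrix.transpose_smul, Matrix.zero_mul,
      Matrix.mul_zero, add_zero, zero_add, smul_zero, Matrix.smul_mul, Matrix.mul_smul,
      smul_smul]
    rw [hAT, hsq, smul_smul,
      show (b * b * (m:ℝ) : ℝ) = 2 by rw [hb2, mul_assoc, inv_mul_cancel₀ hmR.ne', mul_one]]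
  have hsum : Matrix.fromBlocks ((2 * (m : ℝ)) • 1) (-M) (-Mᵀ) ((2 * (m : ℝ)) • 1 - N)
      = C * Cᴴ + E * Eᴴ := by
    rw [hCCT, hEET, Matrix.fromBlocks_add]
    have hlast : N + (2:ℝ) • X = (2*(m:ℝ)) • 1 - N := by
      rw [hX_def]
      ext i j
      simp only [Matrix.add_apply, Matrix.sub_apply, Matrix.smul_apply, Matrix.one_apply,
        smul_eq_mul]
      split_ifs <;> ring
    rw [add_zero, add_zero, add_zero, hlast]
  rw [hsum]
  exact (Matrix.posSemidef_self_mul_conjTranspose C).add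
    (Matrix.posSemidef_self_mul_conjTranspose E)
end

section
/- If there exists a homomorphism f from a pure k-dimensional simplicial complex X to a pure k-dimensional simplicial complex X', then ϑ_k(complement of X) ≤ ϑ_k(complement of X'). In particular, if there is a homomorphism from X to the complete k-complex K_ℓ^k, then ϑ_k(complement of X) ≤ ℓ. -/
open Finset Matrix

variable {V : Type} [Fintype V] [DecidableEq V] [LinearOrder V]

/-- The complement of a pure `k`-dimensional complex: the pure `k`-dimensional complex
whose `k`-dimensional faces are the `(k+1)`-subsets of `V` that are not faces of `X`. -/
def SC.compl (X : SC V) (k : ℕ) : SC V :=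
  ⟨univ.filter fun F => F.card ≤ k + 1 ∧ (F.card = k + 1 → F ∉ X.faces), by
    intro F hF K hK
    simp only [mem_filter, mem_univ, true_and] at hF ⊢
    refine ⟨le_trans (card_le_card hK) hF.1, fun hKc => ?_⟩
    have h1 : K.card ≤ F.card := card_le_card hK
    have hKF : K = F := Finset.eq_of_subset_of_card_le hK (by omega)
    rw [hKF]; exact hF.2 (by omega)⟩

/-- A homomorphism between pure `k`-dimensional simplicial complexes `X` and `X'`: a map
`f : X_{k-1} → X'_{k-1}` such that, for suitable orientations of `X` and `X'` (encoded by
sign functions on the faces, modifying the incidence numbers induced by the vertex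
orders), every `k`-face `H` of `X` has a `k`-face `H'` of `X'` whose `(k-1)`-faces are
exactly the images of the `(k-1)`-faces of `H`, with matching oriented incidence
numbers. -/
def IsHom {V W : Type} [Fintype V] [DecidableEq V] [LinearOrder V]
    [Fintype W] [DecidableEq W] [LinearOrder W]
    (X : SC V) (X' : SC W) (k : ℕ) (f : Finset V → Finset W) : Prop :=
  (∀ F ∈ X.dfaces k, f F ∈ X'.dfaces k) ∧
  ∃ s : Finset V → ℝ, ∃ s' : Finset W → ℝ,
    (∀ F, s F = 1 ∨ s F = -1) ∧ (∀ F, s' F = 1 ∨ s' F = -1) ∧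
    ∀ H ∈ X.dfaces (k + 1), ∃ H' ∈ X'.dfaces (k + 1),
      ((X.dfaces k).filter (fun F => F ⊆ H)).image f =
        (X'.dfaces k).filter (fun F' => F' ⊆ H') ∧
      ∀ F ∈ X.dfaces k, F ⊆ H →
        s' H' * s' (f F) * inc H' (f F) = s H * s F * inc H F

set_option linter.unusedSectionVars false
section AuxIncEps

variable {V : Type} [Fintype V] [DecidableEq V] [LinearOrder V]

lemma inc_of_not {F K : Finset V} (h : ¬(K ⊆ F ∧ F.card = K.card + 1)) : inc F K = 0 :=
  if_neg h

lemma sdiff_singleton_of_card {F K : Finset V} (h : K ⊆ F) (hc : F.card = K.card + 1) :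
    ∃ a, a ∈ F ∧ a ∉ K ∧ F \ K = {a} := by
  have h1 : (F \ K).card = 1 := by rw [Finset.card_sdiff_of_subset h]; omega
  obtain ⟨a, ha⟩ := Finset.card_eq_one.mp h1
  have haF : a ∈ F \ K := ha ▸ Finset.mem_singleton_self a
  exact ⟨a, (Finset.mem_sdiff.mp haF).1, (Finset.mem_sdiff.mp haF).2, ha⟩

lemma inc_eq_pow {F K : Finset V} {a : V} (h : K ⊆ F) (hc : F.card = K.card + 1)
    (ha : F \ K = {a}) : inc F K = (-1 : ℝ) ^ (K.filter (fun y => y < a)).card := by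
  rw [inc, if_pos ⟨h, hc⟩, ha, Finset.sum_singleton]

lemma inc_mul_self_s16 {F K : Finset V} (h : K ⊆ F) (hc : F.card = K.card + 1) :
    inc F K * inc F K = 1 := by
  obtain ⟨a, _, _, ha⟩ := sdiff_singleton_of_card h hc
  rw [inc_eq_pow h hc ha, ← pow_add]
  exact Even.neg_one_pow ⟨_, rfl⟩

lemma card_union_lb {k : ℕ} {F G : Finset V} (hF : F.card = k) (hG : G.card = k)
    (hne : F ≠ G) : k + 1 ≤ (F ∪ G).card := by
  by_contra h
  push_neg at h
  have h1 : F = F ∪ G :=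
    Finset.eq_of_subset_of_card_le Finset.subset_union_left (by omega)
  have h2 : G = F ∪ G :=
    Finset.eq_of_subset_of_card_le Finset.subset_union_right (by omega)
  exact hne (h1.trans h2.symm)

lemma eps_self (F : Finset V) : eps F F = 0 := by
  have : inc F (F ∩ F) = 0 := inc_of_not (by rw [Finset.inter_self]; omega)
  rw [eps, this, zero_mul]

lemma eps_comm (F G : Finset V) : eps F G = eps G F := by
  rw [eps, eps, Finset.inter_comm, mul_comm]

lemma eps_zero_of_card {k : ℕ} {F G : Finset V} (hF : F.card = k) (hG : G.card = k)
    (h : k + 2 ≤ (F ∪ G).card) : eps F G = 0 := by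
  have hi := Finset.card_union_add_card_inter F G
  have : inc F (F ∩ G) = 0 := inc_of_not (by omega)
  rw [eps, this, zero_mul]

lemma inc_union_mul {k : ℕ} {F G : Finset V} (hF : F.card = k) (hG : G.card = k)
    (hne : F ≠ G) (hu : (F ∪ G).card = k + 1) :
    inc (F ∪ G) F * inc (F ∪ G) G = -(eps F G) := by
  have hk1 : 1 ≤ k := by
    rcases Nat.eq_zero_or_pos k with h0 | h; swap; · exact h
    exact absurd (by
      rw [Finset.card_eq_zero.mp (by omega : F.card = 0),
        Finset.card_eq_zero.mp (by omega : G.card = 0)]) hne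
  have hiu := Finset.card_union_add_card_inter F G
  have hFi := Finset.card_inter_add_card_sdiff F G
  have hGi := Finset.card_inter_add_card_sdiff G F
  rw [Finset.inter_comm] at hGi
  obtain ⟨a, ha⟩ := Finset.card_eq_one.mp (by omega : (F \ G).card = 1)
  obtain ⟨b, hb⟩ := Finset.card_eq_one.mp (by omega : (G \ F).card = 1)
  have haF : a ∈ F := (Finset.mem_sdiff.mp (ha ▸ Finset.mem_singleton_self a)).1
  have haG : a ∉ G := (Finset.mem_sdiff.mp (ha ▸ Finset.mem_singleton_self a)).2
  have hbG : b ∈ G := (Finset.mem_sdiff.mp (hb ▸ Finset.mem_singleton_self b)).1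
  have hbF : b ∉ F := (Finset.mem_sdiff.mp (hb ▸ Finset.mem_singleton_self b)).2
  have hab : a ≠ b := fun h => hbF (h ▸ haF)
  have h1 : (F ∪ G) \ F = {b} := by rw [Finset.union_sdiff_left]; exact hb
  have h2 : (F ∪ G) \ G = {a} := by
    rw [Finset.union_comm, Finset.union_sdiff_left]; exact ha
  have h3 : F \ (F ∩ G) = {a} := by rw [Finset.sdiff_inter_self_left]; exact ha
  have h4 : G \ (F ∩ G) = {b} := by
    rw [Finset.inter_comm, Finset.sdiff_inter_self_left]; exact hb
  have hicard : (F ∩ G).card = k - 1 := by omega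
  have hFins : F = insert a (F ∩ G) := by
    have h := Finset.union_sdiff_of_subset (Finset.inter_subset_left (s₁ := F) (s₂ := G))
    conv_lhs => rw [← h]
    rw [h3, Finset.union_comm, ← Finset.insert_eq]
  have hGins : G = insert b (F ∩ G) := by
    have h := Finset.union_sdiff_of_subset (Finset.inter_subset_left (s₁ := G) (s₂ := F))
    rw [Finset.inter_comm G F] at h
    conv_lhs => rw [← h]
    rw [h4, Finset.union_comm, ← Finset.insert_eq]
  have haI : a ∉ F ∩ G := fun h => haG (Finset.mem_inter.mp h).2
  have hbI : b ∉ F ∩ G := fun h => hbF (Finset.mem_inter.mp h).1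
  have hcF : ∀ c : V, (F.filter (fun y => y < c)).card
      = ((F ∩ G).filter (fun y => y < c)).card + (if a < c then 1 else 0) := by
    intro c
    conv_lhs => rw [hFins]
    rw [Finset.filter_insert]
    split
    · rw [Finset.card_insert_of_notMem (fun h => haI (Finset.mem_filter.mp h).1)]
    · omega
  have hcG : ∀ c : V, (G.filter (fun y => y < c)).card
      = ((F ∩ G).filter (fun y => y < c)).card + (if b < c then 1 else 0) := by
    intro c
    conv_lhs => rw [hGins]
    rw [Finset.filter_insert]
    split
    · rw [Finset.card_insert_of_notMem (fun h => hbI (Finset.mem_filter.mp h).1)]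
    · omega
  rw [inc_eq_pow Finset.subset_union_left (by omega) h1,
    inc_eq_pow Finset.subset_union_right (by omega) h2, eps,
    inc_eq_pow Finset.inter_subset_left (by omega) h3,
    inc_eq_pow (Finset.inter_subset_right (s₁ := F)) (by omega) h4,
    hcF b, hcG a]
  rcases hab.lt_or_gt with hlt | hlt
  · rw [if_pos hlt, if_neg (not_lt.mpr hlt.le)]
    rw [pow_succ]
    ring
  · rw [if_neg (not_lt.mpr hlt.le), if_pos hlt]
    rw [pow_succ]
    ring

end AuxIncEps

section AuxPSD

variable {ι : Type} [Fintype ι] [DecidableEq ι]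

lemma psd_smul {Y : Matrix ι ι ℝ} {c : ℝ} (hc : 0 ≤ c) (hY : Y.PosSemidef) :
    (c • Y).PosSemidef := by
  refine Matrix.PosSemidef.of_dotProduct_mulVec_nonneg ?_ ?_
  · have h1 := hY.1
    rw [Matrix.IsHermitian] at h1 ⊢
    rw [Matrix.conjTranspose_smul, h1, star_trivial]
  · intro x
    rw [Matrix.smul_mulVec, dotProduct_smul, smul_eq_mul]
    exact mul_nonneg hc (hY.dotProduct_mulVec_nonneg x)

lemma psd_symm {Y : Matrix ι ι ℝ} (hY : Y.PosSemidef) (i j : ι) : Y i j = Y j i := by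
  have := congrFun (congrFun hY.1 j) i
  simpa [Matrix.conjTranspose_apply] using this

lemma psd_diag_nonneg {Y : Matrix ι ι ℝ} (hY : Y.PosSemidef) (i : ι) : 0 ≤ Y i i := by
  have h := hY.dotProduct_mulVec_nonneg (Pi.single i 1)
  simpa [Matrix.mulVec_single, single_dotProduct] using h

lemma psd_row_zero {Y : Matrix ι ι ℝ} (hY : Y.PosSemidef) (i j : ι) (h : Y i i = 0) :
    Y i j = 0 := by
  rcases eq_or_ne i j with rfl | hij
  · exact h
  by_contra h0
  set c : ℝ := -((Y j j + 1) / (2 * Y i j)) with hc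
  have hq := hY.dotProduct_mulVec_nonneg (c • (Pi.single i 1 : ι → ℝ) + (Pi.single j 1 : ι → ℝ))
  rw [star_trivial] at hq
  have hexp : (c • (Pi.single i 1 : ι → ℝ) + (Pi.single j 1 : ι → ℝ)) ⬝ᵥ
      (Y *ᵥ (c • (Pi.single i 1 : ι → ℝ) + (Pi.single j 1 : ι → ℝ)))
      = c * (c * Y i i) + c * Y i j + (c * Y j i + Y j j) := by
    rw [Matrix.mulVec_add, Matrix.mulVec_smul]
    rw [add_dotProduct, smul_dotProduct]
    rw [dotProduct_add, dotProduct_add]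
    rw [Matrix.mulVec_single, Matrix.mulVec_single]
    simp [single_dotProduct, dotProduct_smul, smul_eq_mul, mul_add]
    try ring
  rw [hexp, h] at hq
  have hji : Y j i = Y i j := psd_symm hY j i
  rw [hji] at hq
  have hcv : c * Y i j = -((Y j j + 1) / 2) := by
    rw [hc]; field_simp
  rw [hcv] at hq
  nlinarith

end AuxPSD

section AuxSum

variable {α β γ δ : Type} [Fintype α] [Fintype β] [Fintype γ] [Fintype δ]
variable {M : Type} [AddCommMonoid M]

lemma sum3_comm (g : α → β → γ → M) :
    ∑ a, ∑ b, ∑ c, g a b c = ∑ b, ∑ c, ∑ a, g a b c := by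
  rw [Finset.sum_comm]
  exact Finset.sum_congr rfl fun b _ => Finset.sum_comm

lemma sum3_comm' (g : α → β → γ → M) :
    ∑ a, ∑ b, ∑ c, g a b c = ∑ c, ∑ a, ∑ b, g a b c :=
  (sum3_comm g).trans (sum3_comm _)

lemma sum4_comm (g : α → β → γ → δ → M) :
    ∑ a, ∑ b, ∑ c, ∑ d, g a b c d = ∑ c, ∑ d, ∑ a, ∑ b, g a b c d := by
  calc ∑ a, ∑ b, ∑ c, ∑ d, g a b c d = ∑ a, ∑ c, ∑ d, ∑ b, g a b c d :=
        Finset.sum_congr rfl fun a _ => sum3_comm _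
    _ = ∑ c, ∑ d, ∑ a, ∑ b, g a b c d := sum3_comm _

end AuxSum

section AuxCount

variable {V : Type} [Fintype V] [DecidableEq V] [LinearOrder V]

lemma card_powersetCard_succ {W : Type} [DecidableEq W] (H : Finset W) (k : ℕ)
    (hH : H.card = k + 1) : (H.powersetCard k).card = k + 1 := by
  rw [Finset.card_powersetCard, hH, Nat.choose_succ_self_right]

lemma sum_ite_subset {k : ℕ} (F : Finset V) (hF : F.card = k) :
    ∑ H : KSet V (k+1), (if F ⊆ H.1 then (1:ℝ) else 0)
      = ((Fintype.card V - k : ℕ) : ℝ) := by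
  have hcount : (Finset.univ.filter (fun H : KSet V (k+1) => F ⊆ H.1)).card
      = Fintype.card V - k := by
    have hcc : Fᶜ.card = Fintype.card V - k := by rw [Finset.card_compl, hF]
    rw [← hcc]
    refine Eq.symm (Finset.card_bij
      (fun (x : V) (hx : x ∈ Fᶜ) =>
        (⟨insert x F, by
          rw [Finset.card_insert_of_notMem (by simpa using hx), hF]⟩ : KSet V (k+1)))
      ?_ ?_ ?_)
    · intro x hx
      simp only [Finset.mem_filter, Finset.mem_univ, true_and]
      exact Finset.subset_insert x F
    · intro x hx y hy hxy
      have h1 : insert x F = insert y F := congrArg Subtype.val hxy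
      rcases Finset.mem_insert.mp (h1 ▸ Finset.mem_insert_self x F) with h | h
      · exact h
      · exact absurd h (by simpa using hx)
    · intro H hH
      simp only [Finset.mem_filter, Finset.mem_univ, true_and] at hH
      have hcard : (H.1 \ F).card = 1 := by
        rw [Finset.card_sdiff_of_subset hH, H.2, hF]; omega
      obtain ⟨x, hx⟩ := Finset.card_eq_one.mp hcard
      have hxm : x ∈ H.1 \ F := hx ▸ Finset.mem_singleton_self x
      refine ⟨x, by simpa using (Finset.mem_sdiff.mp hxm).2, ?_⟩
      apply Subtype.ext
      show insert x F = H.1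
      rw [Finset.insert_eq, ← hx, Finset.sdiff_union_of_subset hH]
  rw [Finset.sum_boole, hcount]

end AuxCount

set_option maxHeartbeats 1600000

section AuxLc

variable {V : Type} [Fintype V] [DecidableEq V] [LinearOrder V]

lemma lc_identity (k : ℕ) (F G : KSet V k) :
    Lc V k F G + ∑ H : KSet V (k+1), inc H.1 F.1 * inc H.1 G.1
      = if F = G then (Fintype.card V : ℝ) else 0 := by
  by_cases hFG : F = G
  · subst hFG
    rw [if_pos rfl, Lc, if_pos rfl]
    have hptw : ∀ H : KSet V (k+1), inc H.1 F.1 * inc H.1 F.1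
        = if F.1 ⊆ H.1 then (1:ℝ) else 0 := by
      intro H
      by_cases hs : F.1 ⊆ H.1
      · rw [if_pos hs]; exact inc_mul_self_s16 hs (by rw [H.2, F.2])
      · rw [if_neg hs, inc_of_not (fun h => hs h.1), zero_mul]
    rw [Finset.sum_congr rfl (fun H _ => hptw H), sum_ite_subset F.1 F.2]
    have hkn : k ≤ Fintype.card V := by
      rw [← F.2]; simpa using Finset.card_le_univ F.1
    rw [Nat.cast_sub hkn]
    ring
  · rw [if_neg hFG, Lc, if_neg hFG]
    have hne : F.1 ≠ G.1 := fun h => hFG (Subtype.ext h)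
    have hub := card_union_lb F.2 G.2 hne
    rcases lt_or_ge ((F.1 ∪ G.1).card) (k+2) with hlt | hge
    · have hu : (F.1 ∪ G.1).card = k+1 := by omega
      have hsum : ∑ H : KSet V (k+1), inc H.1 F.1 * inc H.1 G.1
          = inc (F.1 ∪ G.1) F.1 * inc (F.1 ∪ G.1) G.1 := by
        apply Finset.sum_eq_single_of_mem (⟨F.1 ∪ G.1, hu⟩ : KSet V (k+1))
          (Finset.mem_univ _)
        intro H _ hH
        by_cases h1 : F.1 ⊆ H.1
        · by_cases h2 : G.1 ⊆ H.1
          · exfalso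
            apply hH
            apply Subtype.ext
            exact (Finset.eq_of_subset_of_card_le (Finset.union_subset h1 h2)
              (by rw [H.2, hu])).symm
          · rw [inc_of_not (fun h => h2 h.1), mul_zero]
        · rw [inc_of_not (fun h => h1 h.1), zero_mul]
      rw [hsum, inc_union_mul F.2 G.2 hne hu]
      ring
    · have hsum : ∑ H : KSet V (k+1), inc H.1 F.1 * inc H.1 G.1 = 0 := by
        apply Finset.sum_eq_zero
        intro H _
        by_cases h1 : F.1 ⊆ H.1
        · by_cases h2 : G.1 ⊆ H.1
          · exfalso
            have := Finset.card_le_card (Finset.union_subset h1 h2)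
            rw [H.2] at this
            omega
          · rw [inc_of_not (fun h => h2 h.1), mul_zero]
        · rw [inc_of_not (fun h => h1 h.1), zero_mul]
      rw [hsum, eps_zero_of_card F.2 G.2 hge]
      ring

lemma trace_lc_mul_le (k : ℕ) (Y : Matrix (KSet V k) (KSet V k) ℝ)
    (hY : Y.PosSemidef) (htr : Matrix.trace Y = 1) :
    Matrix.trace (Lc V k * Y) ≤ (Fintype.card V : ℝ) := by
  have expand : Matrix.trace (Lc V k * Y)
      = ∑ F : KSet V k, ∑ G : KSet V k, Lc V k F G * Y G F := by
    simp [Matrix.trace, Matrix.mul_apply, Matrix.diag]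
  have htr' : ∑ F : KSet V k, Y F F = 1 := htr
  have hLc : ∀ F G, Lc V k F G = (if F = G then (Fintype.card V : ℝ) else 0)
      - ∑ H : KSet V (k+1), inc H.1 F.1 * inc H.1 G.1 := by
    intro F G
    have := lc_identity k F G
    linarith
  have hsplit : ∑ F : KSet V k, ∑ G : KSet V k, Lc V k F G * Y G F
      = (∑ F : KSet V k, ∑ G : KSet V k,
          (if F = G then (Fintype.card V : ℝ) else 0) * Y G F)
        - ∑ F : KSet V k, ∑ G : KSet V k,
            (∑ H : KSet V (k+1), inc H.1 F.1 * inc H.1 G.1) * Y G F := by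
    rw [← Finset.sum_sub_distrib]
    apply Finset.sum_congr rfl
    intro F _
    rw [← Finset.sum_sub_distrib]
    apply Finset.sum_congr rfl
    intro G _
    rw [hLc F G]
    ring
  have h1 : ∑ F : KSet V k, ∑ G : KSet V k,
      (if F = G then (Fintype.card V : ℝ) else 0) * Y G F = (Fintype.card V : ℝ) := by
    have : ∀ F : KSet V k, ∑ G : KSet V k,
        (if F = G then (Fintype.card V : ℝ) else 0) * Y G F
        = (Fintype.card V : ℝ) * Y F F := by
      intro F
      rw [Finset.sum_eq_single_of_mem F (Finset.mem_univ F)]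
      · rw [if_pos rfl]
      · intro G _ hG
        rw [if_neg (Ne.symm hG), zero_mul]
    rw [Finset.sum_congr rfl (fun F _ => this F), ← Finset.mul_sum, htr', mul_one]
  have h2 : 0 ≤ ∑ F : KSet V k, ∑ G : KSet V k,
      (∑ H : KSet V (k+1), inc H.1 F.1 * inc H.1 G.1) * Y G F := by
    have hswap : ∑ F : KSet V k, ∑ G : KSet V k,
        (∑ H : KSet V (k+1), inc H.1 F.1 * inc H.1 G.1) * Y G F
        = ∑ H : KSet V (k+1), ∑ G : KSet V k, ∑ F : KSet V k,
            inc H.1 G.1 * (Y G F * inc H.1 F.1) := by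
      calc ∑ F : KSet V k, ∑ G : KSet V k,
          (∑ H : KSet V (k+1), inc H.1 F.1 * inc H.1 G.1) * Y G F
          = ∑ F : KSet V k, ∑ G : KSet V k, ∑ H : KSet V (k+1),
              inc H.1 F.1 * inc H.1 G.1 * Y G F := by
            apply Finset.sum_congr rfl; intro F _
            apply Finset.sum_congr rfl; intro G _
            rw [Finset.sum_mul]
        _ = ∑ H : KSet V (k+1), ∑ F : KSet V k, ∑ G : KSet V k,
              inc H.1 F.1 * inc H.1 G.1 * Y G F := sum3_comm' _
        _ = ∑ H : KSet V (k+1), ∑ G : KSet V k, ∑ F : KSet V k,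
              inc H.1 G.1 * (Y G F * inc H.1 F.1) := by
            apply Finset.sum_congr rfl; intro H _
            rw [Finset.sum_comm]
            apply Finset.sum_congr rfl; intro G _
            apply Finset.sum_congr rfl; intro F _
            ring
    rw [hswap]
    apply Finset.sum_nonneg
    intro H _
    have hq := hY.dotProduct_mulVec_nonneg (fun F : KSet V k => inc H.1 F.1)
    rw [star_trivial] at hq
    convert hq using 1
    simp only [dotProduct, Matrix.mulVec, Finset.mul_sum]
  rw [expand, hsplit, h1]
  linarith

end AuxLc

section AuxTheta

variable {W : Type} [Fintype W] [DecidableEq W] [LinearOrder W]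

lemma theta_le_card (Z : SC W) (k : ℕ) :
    theta Z k ≤ (Fintype.card W : ℝ) := by
  apply Real.sSup_le
  · rintro t ⟨Y, hY, rfl⟩
    exact trace_lc_mul_le k Y hY.1 hY.2.1
  · positivity

lemma theta_bddAbove (Z : SC W) (k : ℕ) :
    BddAbove {t | ∃ Y, thetaFeasible Z k Y ∧ Matrix.trace (Lc W k * Y) = t} := by
  refine ⟨(Fintype.card W : ℝ), ?_⟩
  rintro t ⟨Y, hY, rfl⟩
  exact trace_lc_mul_le k Y hY.1 hY.2.1

lemma dfaces_card {Z : SC W} {m : ℕ} {H : Finset W} (hH : H ∈ Z.dfaces m) :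
    H.card = m := (Finset.mem_filter.mp hH).2

lemma dfaces_face {Z : SC W} {m : ℕ} {H : Finset W} (hH : H ∈ Z.dfaces m) :
    H ∈ Z.faces := (Finset.mem_filter.mp hH).1

lemma compl_dfaces_notface {Z : SC W} {k : ℕ} {S : Finset W}
    (hS : S.card = k + 1) (hSf : S ∉ Z.faces) : S ∈ (Z.compl k).dfaces (k+1) := by
  rw [SC.dfaces, Finset.mem_filter]
  refine ⟨?_, hS⟩
  rw [SC.compl]
  simp only [Finset.mem_filter, Finset.mem_univ, true_and]
  exact ⟨le_of_eq hS, fun _ => hSf⟩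

lemma k_le_theta (Z : SC W) (k : ℕ) (hne : Nonempty (KSet W k)) :
    (k : ℝ) ≤ theta (Z.compl k) k := by
  classical
  set N := Fintype.card (KSet W k) with hN
  have hN0 : 0 < N := Fintype.card_pos_iff.mpr hne
  have hNne : ((N : ℝ)) ≠ 0 := by positivity
  set Y₀ : Matrix (KSet W k) (KSet W k) ℝ := ((N : ℝ))⁻¹ • 1 with hY₀
  have hdiag : ∀ F F' : KSet W k, F ≠ F' → Y₀ F F' = 0 := by
    intro F F' h
    rw [hY₀]
    simp [Matrix.one_apply_ne h]
  have hfeas : thetaFeasible (Z.compl k) k Y₀ := by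
    refine ⟨psd_smul (by positivity) Matrix.PosSemidef.one, ?_, ?_, ?_, ?_⟩
    · rw [hY₀, Matrix.trace_smul, Matrix.trace_one]
      show ((N : ℝ))⁻¹ * (N : ℝ) = 1
      exact inv_mul_cancel₀ hNne
    · intro F F' hmem
      rcases eq_or_ne F F' with rfl | h
      · exfalso
        have := dfaces_card hmem
        rw [Finset.union_self, F.2] at this
        omega
      · exact hdiag F F' h
    · intro F F' hcard
      rcases eq_or_ne F F' with rfl | h
      · rw [Finset.union_self, F.2] at hcard; omega
      · exact hdiag F F' h
    · intro F F' G G' _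
      have hz : ∀ A B : KSet W k, eps A.1 B.1 * Y₀ A B = 0 := by
        intro A B
        rcases eq_or_ne A B with rfl | h
        · rw [eps_self, zero_mul]
        · rw [hdiag A B h, mul_zero]
      rw [hz, hz]
  have hval : Matrix.trace (Lc W k * Y₀) = (k : ℝ) := by
    rw [hY₀, Matrix.mul_smul, Matrix.trace_smul, Matrix.mul_one]
    have : Matrix.trace (Lc W k) = (N : ℝ) * k := by
      rw [Matrix.trace]
      have : ∀ F : KSet W k, Matrix.diag (Lc W k) F = (k : ℝ) := by
        intro F; rw [Matrix.diag, Lc, if_pos rfl]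
      rw [Finset.sum_congr rfl (fun F _ => this F), Finset.sum_const,
        Finset.card_univ, nsmul_eq_mul]
    rw [this, smul_eq_mul]
    field_simp
  apply le_csSup (theta_bddAbove (Z.compl k) k)
  exact ⟨Y₀, hfeas, hval⟩

lemma filter_sub_eq (Z : SC W) (k : ℕ) {H : Finset W} (hH : H ∈ Z.dfaces (k+1)) :
    (Z.dfaces k).filter (fun F => F ⊆ H) = H.powersetCard k := by
  ext F
  rw [Finset.mem_filter, Finset.mem_powersetCard]
  constructor
  · rintro ⟨hF, hsub⟩
    exact ⟨hsub, dfaces_card hF⟩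
  · rintro ⟨hsub, hcard⟩
    refine ⟨Finset.mem_filter.mpr ⟨Z.down_closed (dfaces_face hH) hsub, hcard⟩, hsub⟩

end AuxTheta

section AuxDecomp

variable {V : Type} [Fintype V] [DecidableEq V] [LinearOrder V]

lemma trace_lc_decomp (k : ℕ) (Y : Matrix (KSet V k) (KSet V k) ℝ) :
    Matrix.trace (Lc V k * Y) = (k : ℝ) * Matrix.trace Y
      + ∑ F : KSet V k, ∑ G : KSet V k, eps F.1 G.1 * Y G F := by
  have expand : Matrix.trace (Lc V k * Y)
      = ∑ F : KSet V k, ∑ G : KSet V k, Lc V k F G * Y G F := by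
    simp [Matrix.trace, Matrix.mul_apply, Matrix.diag]
  have hLc : ∀ F G : KSet V k, Lc V k F G
      = (if F = G then (k:ℝ) else 0) + eps F.1 G.1 := by
    intro F G
    rcases eq_or_ne F G with rfl | h
    · rw [Lc, if_pos rfl, if_pos rfl, eps_self]; ring
    · rw [Lc, if_neg h, if_neg h]; ring
  have hptw : ∀ F G : KSet V k, Lc V k F G * Y G F
      = (if F = G then (k:ℝ) else 0) * Y G F + eps F.1 G.1 * Y G F := by
    intro F G; rw [hLc F G]; ring
  rw [expand,
    Finset.sum_congr rfl (fun F _ => Finset.sum_congr rfl (fun G _ => hptw F G)),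
    Finset.sum_congr rfl (fun F _ => Finset.sum_add_distrib), Finset.sum_add_distrib]
  congr 1
  have hdg : ∀ F : KSet V k,
      ∑ G : KSet V k, (if F = G then (k:ℝ) else 0) * Y G F = (k:ℝ) * Y F F := by
    intro F
    rw [Finset.sum_eq_single_of_mem F (Finset.mem_univ F)]
    · rw [if_pos rfl]
    · intro G _ hG; rw [if_neg (Ne.symm hG), zero_mul]
  rw [Finset.sum_congr rfl (fun F _ => hdg F), ← Finset.mul_sum]
  rfl

end AuxDecomp

section MainStep

lemma main_step {V W : Type} [Fintype V] [DecidableEq V] [LinearOrder V]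
    [Fintype W] [DecidableEq W] [LinearOrder W]
    (X : SC V) (X' : SC W) (k : ℕ)
    (f : Finset V → Finset W) (hf : IsHom X X' k f)
    (hW : Nonempty (KSet W k))
    (Y : Matrix (KSet V k) (KSet V k) ℝ) (hY : thetaFeasible (X.compl k) k Y) :
    Matrix.trace (Lc V k * Y) ≤ theta (X'.compl k) k := by
  classical
  obtain ⟨hfd, s, s', hs, hs', hhom⟩ := hf
  obtain ⟨hpsd, htr, hz1, hz2, hsymc⟩ := hY
  have hsymm : ∀ F G : KSet V k, Y G F = Y F G := fun F G => psd_symm hpsd G F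
  have hsq : ∀ F : Finset V, (s F * s' (f F)) * (s F * s' (f F)) = 1 := by
    intro F
    rcases hs F with h1 | h1 <;> rcases hs' (f F) with h2 | h2 <;> rw [h1, h2] <;> norm_num
  have hssq : ∀ F : Finset V, s F * s F = 1 := by
    intro F; rcases hs F with h | h <;> rw [h] <;> norm_num
  have hs'sq : ∀ F : Finset W, s' F * s' F = 1 := by
    intro F; rcases hs' F with h | h <;> rw [h] <;> norm_num
  set M : Matrix (KSet V k) (KSet W k) ℝ :=
    fun F A => if F.1 ∈ X.dfaces k ∧ f F.1 = A.1 then s F.1 * s' (f F.1) else 0 with hM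
  have hMsupp : ∀ (F : KSet V k) (A : KSet W k), M F A ≠ 0 →
      F.1 ∈ X.dfaces k ∧ f F.1 = A.1 := by
    intro F A h
    by_cases hc : F.1 ∈ X.dfaces k ∧ f F.1 = A.1
    · exact hc
    · exact absurd (by simp only [hM]; exact if_neg hc) h
  have hMval : ∀ (F : KSet V k) (A : KSet W k), F.1 ∈ X.dfaces k → f F.1 = A.1 →
      M F A = s F.1 * s' (f F.1) := by
    intro F A h1 h2; simp only [hM]; exact if_pos ⟨h1, h2⟩
  have hP2 : ∀ (F G : KSet V k), F ≠ G → Y F G ≠ 0 → F.1 ∪ G.1 ∈ X.dfaces (k+1) := by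
    intro F G hne h0
    have hne' : F.1 ≠ G.1 := fun h => hne (Subtype.ext h)
    have hlb := card_union_lb F.2 G.2 hne'
    rcases lt_or_ge ((F.1 ∪ G.1).card) (k+2) with hlt | hge
    · have hcu : (F.1 ∪ G.1).card = k+1 := by omega
      by_contra hmem
      have hnf : F.1 ∪ G.1 ∉ X.faces := fun hfc =>
        hmem (Finset.mem_filter.mpr ⟨hfc, hcu⟩)
      exact h0 (hz1 F G (compl_dfaces_notface hcu hnf))
    · exact absurd (hz2 F G hge) h0
  have hmemP : ∀ {H : Finset V}, H ∈ X.dfaces (k+1) → ∀ {F : Finset V},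
      F ⊆ H → F.card = k → F ∈ X.dfaces k := by
    intro H hH F hsub hc
    exact Finset.mem_filter.mpr ⟨X.down_closed (dfaces_face hH) hsub, hc⟩
  have hpack : ∀ H, H ∈ X.dfaces (k+1) → ∃ H', H' ∈ X'.dfaces (k+1) ∧
      (H.powersetCard k).image f = H'.powersetCard k ∧
      Set.InjOn f (H.powersetCard k) ∧
      (∀ F ∈ X.dfaces k, F ⊆ H →
        s' H' * s' (f F) * inc H' (f F) = s H * s F * inc H F) := by
    intro H hH
    obtain ⟨H', hH', himg, hsgn⟩ := hhom H hH
    rw [filter_sub_eq X k hH, filter_sub_eq X' k hH'] at himg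
    have hinj : Set.InjOn f (H.powersetCard k) :=
      Finset.injOn_of_card_image_eq (by
        rw [himg, card_powersetCard_succ _ _ (dfaces_card hH'),
          card_powersetCard_succ _ _ (dfaces_card hH)])
    exact ⟨H', hH', himg, hinj, hsgn⟩
  have hfinj : ∀ (F G : KSet V k), F ≠ G → Y F G ≠ 0 → f F.1 ≠ f G.1 := by
    intro F G hne h0
    have hH := hP2 F G hne h0
    obtain ⟨H', hH', himg, hinj, _⟩ := hpack _ hH
    intro heq
    apply hne
    apply Subtype.ext
    exact hinj
      (Finset.mem_coe.mpr (Finset.mem_powersetCard.mpr ⟨Finset.subset_union_left, F.2⟩))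
      (Finset.mem_coe.mpr (Finset.mem_powersetCard.mpr ⟨Finset.subset_union_right, G.2⟩))
      heq
  have hepsfact : ∀ (F G : KSet V k), F ≠ G → Y F G ≠ 0 →
      F.1 ∈ X.dfaces k ∧ G.1 ∈ X.dfaces k ∧
      eps (f F.1) (f G.1) * (s F.1 * s' (f F.1)) * (s G.1 * s' (f G.1))
        = eps F.1 G.1 := by
    intro F G hne h0
    have hH := hP2 F G hne h0
    have hcardH : (F.1 ∪ G.1).card = k + 1 := dfaces_card hH
    have hFface : F.1 ∈ X.dfaces k := hmemP hH Finset.subset_union_left F.2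
    have hGface : G.1 ∈ X.dfaces k := hmemP hH Finset.subset_union_right G.2
    obtain ⟨H', hH', himg, hinj, hsgn⟩ := hpack _ hH
    have hne' : F.1 ≠ G.1 := fun h => hne (Subtype.ext h)
    have hcardH' : H'.card = k + 1 := dfaces_card hH'
    have hFmem : F.1 ∈ (F.1 ∪ G.1).powersetCard k :=
      Finset.mem_powersetCard.mpr ⟨Finset.subset_union_left, F.2⟩
    have hGmem : G.1 ∈ (F.1 ∪ G.1).powersetCard k :=
      Finset.mem_powersetCard.mpr ⟨Finset.subset_union_right, G.2⟩
    have hfF : f F.1 ∈ H'.powersetCard k := by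
      rw [← himg]; exact Finset.mem_image_of_mem f hFmem
    have hfG : f G.1 ∈ H'.powersetCard k := by
      rw [← himg]; exact Finset.mem_image_of_mem f hGmem
    have hfFcard : (f F.1).card = k := (Finset.mem_powersetCard.mp hfF).2
    have hfGcard : (f G.1).card = k := (Finset.mem_powersetCard.mp hfG).2
    have hfne : f F.1 ≠ f G.1 := hfinj F G hne h0
    have hUnion' : f F.1 ∪ f G.1 = H' :=
      Finset.eq_of_subset_of_card_le
        (Finset.union_subset (Finset.mem_powersetCard.mp hfF).1
          (Finset.mem_powersetCard.mp hfG).1)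
        (by rw [hcardH']; exact card_union_lb hfFcard hfGcard hfne)
    have e1 := hsgn F.1 hFface Finset.subset_union_left
    have e2 := hsgn G.1 hGface Finset.subset_union_right
    have hL2 : inc (F.1 ∪ G.1) F.1 * inc (F.1 ∪ G.1) G.1 = -(eps F.1 G.1) :=
      inc_union_mul F.2 G.2 hne' hcardH
    have hL2' : inc H' (f F.1) * inc H' (f G.1) = -(eps (f F.1) (f G.1)) := by
      rw [← hUnion']
      exact inc_union_mul hfFcard hfGcard hfne (by rw [hUnion']; exact hcardH')
    refine ⟨hFface, hGface, ?_⟩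
    have hq1 := hssq (F.1 ∪ G.1)
    have hq2 := hs'sq H'
    have h6 := hs'sq (f F.1)
    have h7 := hs'sq (f G.1)
    have e1' : inc H' (f F.1)
        = s' H' * s' (f F.1) * (s (F.1 ∪ G.1) * s F.1 * inc (F.1 ∪ G.1) F.1) := by
      linear_combination (s' H' * s' (f F.1)) * e1
        - (inc H' (f F.1) * s' (f F.1) * s' (f F.1)) * hq2
        - inc H' (f F.1) * h6
    have e2' : inc H' (f G.1)
        = s' H' * s' (f G.1) * (s (F.1 ∪ G.1) * s G.1 * inc (F.1 ∪ G.1) G.1) := by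
      linear_combination (s' H' * s' (f G.1)) * e2
        - (inc H' (f G.1) * s' (f G.1) * s' (f G.1)) * hq2
        - inc H' (f G.1) * h7
    have heps1 : eps (f F.1) (f G.1) = -(inc H' (f F.1) * inc H' (f G.1)) := by
      linarith [hL2']
    have heps2 : eps F.1 G.1
        = -(inc (F.1 ∪ G.1) F.1 * inc (F.1 ∪ G.1) G.1) := by
      linarith [hL2]
    rw [heps1, heps2, e1', e2']
    rcases hs (F.1 ∪ G.1) with g1 | g1 <;> rcases hs' H' with g2 | g2 <;>
      rcases hs F.1 with g3 | g3 <;> rcases hs G.1 with g4 | g4 <;>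
      rcases hs' (f F.1) with g5 | g5 <;> rcases hs' (f G.1) with g6 | g6 <;>
      rw [g1, g2, g3, g4, g5, g6] <;> ring
  set Y' : Matrix (KSet W k) (KSet W k) ℝ :=
    fun A B => ∑ F : KSet V k, ∑ G : KSet V k, M F A * Y F G * M G B with hY'
  have hY'mat : Y' = Mᵀ * Y * M := by
    ext A B
    simp only [hY', Matrix.mul_apply, Matrix.transpose_apply, Finset.sum_mul]
    rw [Finset.sum_comm]
    try (apply Finset.sum_congr rfl; intro F _;
         apply Finset.sum_congr rfl; intro G _; ring)
  have hY'psd : Y'.PosSemidef := by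
    rw [hY'mat]
    have h := Matrix.PosSemidef.conjTranspose_mul_mul_same hpsd M
    have he : Mᴴ = Mᵀ := by
      ext i j; simp [Matrix.conjTranspose_apply]
    rwa [he] at h
  have hAf : ∀ F : KSet V k, F.1 ∈ X.dfaces k → (f F.1).card = k :=
    fun F h => dfaces_card (hfd F.1 h)
  set t : ℝ := ∑ F : KSet V k, (if F.1 ∈ X.dfaces k then Y F F else 0) with hT
  have hinner : ∀ F G : KSet V k, (∑ A : KSet W k, M F A * Y F G * M G A)
      = if F = G ∧ F.1 ∈ X.dfaces k then Y F F else 0 := by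
    intro F G
    by_cases hFf : F.1 ∈ X.dfaces k
    · by_cases hGf : G.1 ∈ X.dfaces k
      · rcases eq_or_ne F G with rfl | hFG
        · rw [if_pos ⟨rfl, hFf⟩]
          rw [Finset.sum_eq_single_of_mem (⟨f F.1, hAf F hFf⟩ : KSet W k)
            (Finset.mem_univ _)]
          · rw [hMval F _ hFf rfl]
            linear_combination Y F F * hsq F.1
          · intro A _ hA
            have hM0 : M F A = 0 := by
              simp only [hM]
              apply if_neg
              rintro ⟨_, hfa⟩
              exact hA (Subtype.ext hfa.symm)
            rw [hM0]; ring
        · rw [if_neg (fun h => hFG h.1)]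
          by_cases hff : f F.1 = f G.1
          · have hY0 : Y F G = 0 := by
              by_contra h0; exact hfinj F G hFG h0 hff
            apply Finset.sum_eq_zero; intro A _; rw [hY0]; ring
          · apply Finset.sum_eq_zero; intro A _
            rcases eq_or_ne (M F A) 0 with h | h
            · rw [h]; ring
            rcases eq_or_ne (M G A) 0 with h2 | h2
            · rw [h2]; ring
            exact absurd ((hMsupp F A h).2.trans (hMsupp G A h2).2.symm) hff
      · rw [if_neg (fun (h : F = G ∧ F.1 ∈ X.dfaces k) => hGf (h.1 ▸ hFf))]
        apply Finset.sum_eq_zero; intro A _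
        have hM0 : M G A = 0 := by
          simp only [hM]; exact if_neg (fun hc => hGf hc.1)
        rw [hM0]; ring
    · rw [if_neg (fun h => hFf h.2)]
      apply Finset.sum_eq_zero; intro A _
      have hM0 : M F A = 0 := by
        simp only [hM]; exact if_neg (fun hc => hFf hc.1)
      rw [hM0]; ring
  have htrY' : Matrix.trace Y' = t := by
    have h1 : Matrix.trace Y'
        = ∑ A : KSet W k, ∑ F : KSet V k, ∑ G : KSet V k, M F A * Y F G * M G A := by
      simp only [Matrix.trace, Matrix.diag, hY']
    have hsw := sum3_comm
      (fun (A : KSet W k) (F : KSet V k) (G : KSet V k) => M F A * Y F G * M G A)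
    rw [h1, hsw, hT]
    apply Finset.sum_congr rfl; intro F _
    rw [Finset.sum_congr rfl (fun G _ => hinner F G)]
    by_cases hc : F.1 ∈ X.dfaces k
    · rw [if_pos hc, Finset.sum_eq_single_of_mem F (Finset.mem_univ F)]
      · rw [if_pos ⟨rfl, hc⟩]
      · intro G _ hG; exact if_neg (fun h => hG h.1.symm)
    · rw [if_neg hc]
      apply Finset.sum_eq_zero; intro G _
      exact if_neg (fun h => hc h.2)
  set off : ℝ := ∑ F : KSet V k, ∑ G : KSet V k, eps F.1 G.1 * Y F G with hOff
  have hptw : ∀ F G : KSet V k,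
      (∑ A : KSet W k, ∑ B : KSet W k, eps A.1 B.1 * (M F A * Y F G * M G B))
        = eps F.1 G.1 * Y F G := by
    intro F G
    rcases eq_or_ne (Y F G) 0 with hY0 | hY0
    · rw [hY0, mul_zero]
      apply Finset.sum_eq_zero; intro A _
      apply Finset.sum_eq_zero; intro B _
      ring
    rcases eq_or_ne F G with rfl | hFG
    · rw [eps_self, zero_mul]
      apply Finset.sum_eq_zero; intro A _
      apply Finset.sum_eq_zero; intro B _
      rcases eq_or_ne (M F A) 0 with h | h
      · rw [h]; ring
      rcases eq_or_ne (M F B) 0 with h2 | h2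
      · rw [h2]; ring
      have hab : A.1 = B.1 := ((hMsupp F A h).2.symm).trans (hMsupp F B h2).2
      have he0 : eps A.1 B.1 = 0 := by rw [hab]; exact eps_self B.1
      rw [he0]; ring
    · obtain ⟨hFf, hGf, hmap⟩ := hepsfact F G hFG hY0
      rw [Finset.sum_eq_single_of_mem (⟨f F.1, hAf F hFf⟩ : KSet W k)
        (Finset.mem_univ _)]
      · rw [Finset.sum_eq_single_of_mem (⟨f G.1, hAf G hGf⟩ : KSet W k)
          (Finset.mem_univ _)]
        · rw [hMval F _ hFf rfl, hMval G _ hGf rfl]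
          linear_combination Y F G * hmap
        · intro B _ hB
          have hM0 : M G B = 0 := by
            simp only [hM]; apply if_neg; rintro ⟨_, hfb⟩
            exact hB (Subtype.ext hfb.symm)
          rw [hM0]; ring
      · intro A _ hA
        have hM0 : M F A = 0 := by
          simp only [hM]; apply if_neg; rintro ⟨_, hfa⟩
          exact hA (Subtype.ext hfa.symm)
        apply Finset.sum_eq_zero; intro B _
        rw [hM0]; ring
  have hoffY' : ∑ A : KSet W k, ∑ B : KSet W k, eps A.1 B.1 * Y' A B = off := by
    have h1 : ∀ A B : KSet W k, eps A.1 B.1 * Y' A B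
        = ∑ F : KSet V k, ∑ G : KSet V k, eps A.1 B.1 * (M F A * Y F G * M G B) := by
      intro A B
      simp only [hY', Finset.mul_sum]
    rw [Finset.sum_congr rfl (fun A _ => Finset.sum_congr rfl (fun B _ => h1 A B))]
    have hsw := sum4_comm (fun (A B : KSet W k) (F G : KSet V k) =>
      eps A.1 B.1 * (M F A * Y F G * M G B))
    rw [hsw, hOff]
    exact Finset.sum_congr rfl (fun F _ => Finset.sum_congr rfl (fun G _ => hptw F G))
  have hY'z : ∀ A B : KSet W k,
      (A.1 ∪ B.1 ∈ (X'.compl k).dfaces (k+1) ∨ k+2 ≤ (A.1 ∪ B.1).card) →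
      Y' A B = 0 := by
    intro A B hcase
    simp only [hY']
    apply Finset.sum_eq_zero; intro F _
    apply Finset.sum_eq_zero; intro G _
    rcases eq_or_ne (M F A) 0 with h | h
    · rw [h]; ring
    rcases eq_or_ne (Y F G) 0 with hY0 | hY0
    · rw [hY0]; ring
    rcases eq_or_ne (M G B) 0 with h2 | h2
    · rw [h2]; ring
    obtain ⟨hFf, hfa⟩ := hMsupp F A h
    obtain ⟨hGf, hfb⟩ := hMsupp G B h2
    exfalso
    rcases eq_or_ne F G with rfl | hFG
    · have hab : A.1 = B.1 := hfa.symm.trans hfb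
      have hcard : (A.1 ∪ B.1).card = k := by rw [← hab, Finset.union_self, A.2]
      rcases hcase with hmem | hge
      · have := dfaces_card hmem; omega
      · omega
    · have hH := hP2 F G hFG hY0
      obtain ⟨H', hH', himg, hinj, _⟩ := hpack _ hH
      have hcardH' : H'.card = k+1 := dfaces_card hH'
      have hfF : f F.1 ∈ H'.powersetCard k := by
        rw [← himg]
        exact Finset.mem_image_of_mem f
          (Finset.mem_powersetCard.mpr ⟨Finset.subset_union_left, F.2⟩)
      have hfG : f G.1 ∈ H'.powersetCard k := by
        rw [← himg]
        exact Finset.mem_image_of_mem f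
          (Finset.mem_powersetCard.mpr ⟨Finset.subset_union_right, G.2⟩)
      have hAB : A.1 ∪ B.1 = H' := by
        rw [← hfa, ← hfb]
        apply Finset.eq_of_subset_of_card_le
          (Finset.union_subset (Finset.mem_powersetCard.mp hfF).1
            (Finset.mem_powersetCard.mp hfG).1)
        rw [hcardH']
        exact card_union_lb (Finset.mem_powersetCard.mp hfF).2
          (Finset.mem_powersetCard.mp hfG).2 (hfinj F G hFG hY0)
      rcases hcase with hmem | hge
      · rw [hAB] at hmem
        have h1 := dfaces_face hmem
        rw [SC.compl] at h1
        simp only [Finset.mem_filter, Finset.mem_univ, true_and] at h1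
        exact h1.2 hcardH' (dfaces_face hH')
      · rw [hAB, hcardH'] at hge; omega
  have hkey : ∀ A B C D : KSet W k, A.1 ∪ B.1 = C.1 ∪ D.1 →
      eps A.1 B.1 * Y' A B = eps C.1 D.1 * Y' C D := by
    intro A B C D hu
    rcases eq_or_ne A B with rfl | hAB
    · have hCA : C = A := by
        apply Subtype.ext
        apply Finset.eq_of_subset_of_card_le
        · have h1 : C.1 ⊆ C.1 ∪ D.1 := Finset.subset_union_left
          rwa [← hu, Finset.union_self] at h1
        · rw [A.2, C.2]
      have hDA : D = A := by
        apply Subtype.ext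
        apply Finset.eq_of_subset_of_card_le
        · have h1 : D.1 ⊆ C.1 ∪ D.1 := Finset.subset_union_right
          rwa [← hu, Finset.union_self] at h1
        · rw [A.2, D.2]
      rw [hCA, hDA]
    · have hCD : C ≠ D := by
        rintro rfl
        rw [Finset.union_self] at hu
        have hA : A.1 = C.1 := Finset.eq_of_subset_of_card_le
          (hu ▸ Finset.subset_union_left) (by rw [A.2, C.2])
        have hB : B.1 = C.1 := Finset.eq_of_subset_of_card_le
          (hu ▸ Finset.subset_union_right) (by rw [B.2, C.2])
        exact hAB (Subtype.ext (hA.trans hB.symm))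
      have hexp : ∀ P Q : KSet W k, eps P.1 Q.1 * Y' P Q
          = ∑ H ∈ (Finset.univ : Finset (Finset V)),
              ∑ p ∈ (Finset.univ ×ˢ Finset.univ).filter
                (fun p : KSet V k × KSet V k => p.1.1 ∪ p.2.1 = H),
                eps P.1 Q.1 * (M p.1 P * Y p.1 p.2 * M p.2 Q) := by
        intro P Q
        rw [Finset.sum_fiberwise_of_maps_to
          (g := fun p : KSet V k × KSet V k => p.1.1 ∪ p.2.1)
          (fun p _ => Finset.mem_univ (p.1.1 ∪ p.2.1))
          (fun p : KSet V k × KSet V k => eps P.1 Q.1 * (M p.1 P * Y p.1 p.2 * M p.2 Q))]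
        rw [Finset.sum_product]
        simp only [hY', Finset.mul_sum]
      rw [hexp A B, hexp C D]
      apply Finset.sum_congr rfl
      intro H _
      by_cases hH : H ∈ X.dfaces (k+1)
      · obtain ⟨H', hH', himg, hinj, hsgn⟩ := hpack H hH
        have hcardH : H.card = k + 1 := dfaces_card hH
        have hcardH' : H'.card = k + 1 := dfaces_card hH'
        by_cases hS : A.1 ∪ B.1 = H'
        · have hpre : ∀ P : KSet W k, P.1 ⊆ H' → ∃ FP : KSet V k,
              FP.1 ∈ H.powersetCard k ∧ FP.1 ∈ X.dfaces k ∧ f FP.1 = P.1 := by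
            intro P hP
            have hPm : P.1 ∈ H'.powersetCard k :=
              Finset.mem_powersetCard.mpr ⟨hP, P.2⟩
            rw [← himg] at hPm
            obtain ⟨F0, hF0, hfF0⟩ := Finset.mem_image.mp hPm
            exact ⟨⟨F0, (Finset.mem_powersetCard.mp hF0).2⟩, hF0,
              hmemP hH (Finset.mem_powersetCard.mp hF0).1
                (Finset.mem_powersetCard.mp hF0).2, hfF0⟩
          obtain ⟨FA, hFAp, hFAf, hFAe⟩ := hpre A
            (by rw [← hS]; exact Finset.subset_union_left)
          obtain ⟨FB, hFBp, hFBf, hFBe⟩ := hpre B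
            (by rw [← hS]; exact Finset.subset_union_right)
          obtain ⟨FC, hFCp, hFCf, hFCe⟩ := hpre C
            (by rw [← hS, hu]; exact Finset.subset_union_left)
          obtain ⟨FD, hFDp, hFDf, hFDe⟩ := hpre D
            (by rw [← hS, hu]; exact Finset.subset_union_right)
          have hsingle : ∀ (P Q : KSet W k) (FP FQ : KSet V k), P ≠ Q →
              FP.1 ∈ H.powersetCard k → FQ.1 ∈ H.powersetCard k →
              FP.1 ∈ X.dfaces k → FQ.1 ∈ X.dfaces k →
              f FP.1 = P.1 → f FQ.1 = Q.1 →
              (∑ p ∈ (Finset.univ ×ˢ Finset.univ).filter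
                (fun p : KSet V k × KSet V k => p.1.1 ∪ p.2.1 = H),
                eps P.1 Q.1 * (M p.1 P * Y p.1 p.2 * M p.2 Q))
              = eps FP.1 FQ.1 * Y FP FQ := by
            intro P Q FP FQ hPQ hFPp hFQp hFPf hFQf hfP hfQ
            have hFPQ : FP ≠ FQ :=
              fun he => hPQ (Subtype.ext (hfP.symm.trans (he ▸ hfQ)))
            have hUnion : FP.1 ∪ FQ.1 = H := Finset.eq_of_subset_of_card_le
              (Finset.union_subset (Finset.mem_powersetCard.mp hFPp).1
                (Finset.mem_powersetCard.mp hFQp).1)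
              (by rw [hcardH]
                  exact card_union_lb FP.2 FQ.2 (fun hh => hFPQ (Subtype.ext hh)))
            rw [Finset.sum_eq_single_of_mem (FP, FQ) (Finset.mem_filter.mpr
              ⟨Finset.mem_product.mpr ⟨Finset.mem_univ _, Finset.mem_univ _⟩, hUnion⟩)]
            · rw [hMval FP P hFPf hfP, hMval FQ Q hFQf hfQ, hfP, hfQ]
              rcases eq_or_ne (Y FP FQ) 0 with h0 | h0
              · rw [h0]; ring
              · obtain ⟨_, _, hmap⟩ := hepsfact FP FQ hFPQ h0
                rw [hfP, hfQ] at hmap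
                linear_combination Y FP FQ * hmap
            · intro p hp hpne
              rcases eq_or_ne (M p.1 P) 0 with h | h
              · rw [h]; ring
              rcases eq_or_ne (Y p.1 p.2) 0 with h0 | h0
              · rw [h0]; ring
              rcases eq_or_ne (M p.2 Q) 0 with h2 | h2
              · rw [h2]; ring
              exfalso
              obtain ⟨h1f, h1e⟩ := hMsupp p.1 P h
              obtain ⟨h2f, h2e⟩ := hMsupp p.2 Q h2
              have hpH := (Finset.mem_filter.mp hp).2
              have hp1 : p.1.1 ∈ H.powersetCard k :=
                Finset.mem_powersetCard.mpr ⟨hpH ▸ Finset.subset_union_left, p.1.2⟩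
              have hp2 : p.2.1 ∈ H.powersetCard k :=
                Finset.mem_powersetCard.mpr ⟨hpH ▸ Finset.subset_union_right, p.2.2⟩
              apply hpne
              have he1 : p.1 = FP := Subtype.ext (hinj (Finset.mem_coe.mpr hp1)
                (Finset.mem_coe.mpr hFPp) (by rw [h1e, hfP]))
              have he2 : p.2 = FQ := Subtype.ext (hinj (Finset.mem_coe.mpr hp2)
                (Finset.mem_coe.mpr hFQp) (by rw [h2e, hfQ]))
              exact Prod.ext he1 he2
          rw [hsingle A B FA FB hAB hFAp hFBp hFAf hFBf hFAe hFBe,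
            hsingle C D FC FD hCD hFCp hFDp hFCf hFDf hFCe hFDe]
          have hFABne : FA ≠ FB :=
            fun he => hAB (Subtype.ext (hFAe.symm.trans (he ▸ hFBe)))
          have hFCDne : FC ≠ FD :=
            fun he => hCD (Subtype.ext (hFCe.symm.trans (he ▸ hFDe)))
          have hUab : FA.1 ∪ FB.1 = H := Finset.eq_of_subset_of_card_le
            (Finset.union_subset (Finset.mem_powersetCard.mp hFAp).1
              (Finset.mem_powersetCard.mp hFBp).1)
            (by rw [hcardH]
                exact card_union_lb FA.2 FB.2 (fun hh => hFABne (Subtype.ext hh)))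
          have hUcd : FC.1 ∪ FD.1 = H := Finset.eq_of_subset_of_card_le
            (Finset.union_subset (Finset.mem_powersetCard.mp hFCp).1
              (Finset.mem_powersetCard.mp hFDp).1)
            (by rw [hcardH]
                exact card_union_lb FC.2 FD.2 (fun hh => hFCDne (Subtype.ext hh)))
          exact hsymc FA FB FC FD (by rw [hUab, hUcd])
        · have hz2' : ∀ P Q : KSet W k, P ≠ Q → P.1 ∪ Q.1 = A.1 ∪ B.1 →
              (∑ p ∈ (Finset.univ ×ˢ Finset.univ).filter
                (fun p : KSet V k × KSet V k => p.1.1 ∪ p.2.1 = H),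
                eps P.1 Q.1 * (M p.1 P * Y p.1 p.2 * M p.2 Q)) = 0 := by
            intro P Q hPQ hPQu
            apply Finset.sum_eq_zero
            intro p hp
            rcases eq_or_ne (M p.1 P) 0 with h | h
            · rw [h]; ring
            rcases eq_or_ne (Y p.1 p.2) 0 with h0 | h0
            · rw [h0]; ring
            rcases eq_or_ne (M p.2 Q) 0 with h2 | h2
            · rw [h2]; ring
            exfalso
            obtain ⟨h1f, h1e⟩ := hMsupp p.1 P h
            obtain ⟨h2f, h2e⟩ := hMsupp p.2 Q h2
            have hpH := (Finset.mem_filter.mp hp).2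
            have hp1 : p.1.1 ∈ H.powersetCard k :=
              Finset.mem_powersetCard.mpr ⟨hpH ▸ Finset.subset_union_left, p.1.2⟩
            have hp2 : p.2.1 ∈ H.powersetCard k :=
              Finset.mem_powersetCard.mpr ⟨hpH ▸ Finset.subset_union_right, p.2.2⟩
            have hPm : P.1 ∈ H'.powersetCard k := by
              rw [← himg, ← h1e]
              exact Finset.mem_image_of_mem f hp1
            have hQm : Q.1 ∈ H'.powersetCard k := by
              rw [← himg, ← h2e]
              exact Finset.mem_image_of_mem f hp2
            have hPQH' : P.1 ∪ Q.1 = H' := Finset.eq_of_subset_of_card_le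
              (Finset.union_subset (Finset.mem_powersetCard.mp hPm).1
                (Finset.mem_powersetCard.mp hQm).1)
              (by rw [hcardH']
                  exact card_union_lb P.2 Q.2 (fun hh => hPQ (Subtype.ext hh)))
            rw [hPQu] at hPQH'
            exact hS hPQH'
          rw [hz2' A B hAB rfl, hz2' C D hCD hu.symm]
      · have hz' : ∀ P Q : KSet W k, P ≠ Q →
            (∑ p ∈ (Finset.univ ×ˢ Finset.univ).filter
              (fun p : KSet V k × KSet V k => p.1.1 ∪ p.2.1 = H),
              eps P.1 Q.1 * (M p.1 P * Y p.1 p.2 * M p.2 Q)) = 0 := by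
          intro P Q hPQ
          apply Finset.sum_eq_zero
          intro p hp
          rcases eq_or_ne (M p.1 P) 0 with h | h
          · rw [h]; ring
          rcases eq_or_ne (Y p.1 p.2) 0 with h0 | h0
          · rw [h0]; ring
          rcases eq_or_ne (M p.2 Q) 0 with h2 | h2
          · rw [h2]; ring
          exfalso
          obtain ⟨h1f, h1e⟩ := hMsupp p.1 P h
          obtain ⟨h2f, h2e⟩ := hMsupp p.2 Q h2
          have hpne : p.1 ≠ p.2 :=
            fun he => hPQ (Subtype.ext (h1e.symm.trans (he ▸ h2e)))
          have hHm := hP2 p.1 p.2 hpne h0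
          rw [(Finset.mem_filter.mp hp).2] at hHm
          exact hH hHm
        rw [hz' A B hAB, hz' C D hCD]
  have hobjY : Matrix.trace (Lc V k * Y) = (k : ℝ) + off := by
    rw [trace_lc_decomp k Y, htr, mul_one, hOff]
    congr 1
    apply Finset.sum_congr rfl; intro F _
    apply Finset.sum_congr rfl; intro G _
    rw [hsymm F G]
  have hk_theta : (k : ℝ) ≤ theta (X'.compl k) k := k_le_theta X' k hW
  rcases le_or_gt off 0 with hoff | hoff
  · rw [hobjY]; linarith
  · have htnn : ∀ F : KSet V k, 0 ≤ (if F.1 ∈ X.dfaces k then Y F F else 0) := by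
      intro F
      split
      · exact psd_diag_nonneg hpsd F
      · exact le_rfl
    have ht0 : 0 ≤ t := by rw [hT]; exact Finset.sum_nonneg (fun F _ => htnn F)
    have htr'' : ∑ F : KSet V k, Y F F = 1 := htr
    have ht1 : t ≤ 1 := by
      rw [hT, ← htr'']
      apply Finset.sum_le_sum
      intro F _
      split
      · exact le_rfl
      · exact psd_diag_nonneg hpsd F
    have htpos : 0 < t := by
      rcases ht0.lt_or_eq with h | h
      · exact h
      exfalso
      have hdiag0 : ∀ F : KSet V k, F.1 ∈ X.dfaces k → Y F F = 0 := by
        have hall := (Finset.sum_eq_zero_iff_of_nonneg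
          (fun F _ => htnn F)).mp (by rw [← hT]; exact h.symm)
        intro F hFf
        have := hall F (Finset.mem_univ F)
        rwa [if_pos hFf] at this
      have hoff0 : off = 0 := by
        rw [hOff]
        apply Finset.sum_eq_zero; intro F _
        apply Finset.sum_eq_zero; intro G _
        rcases eq_or_ne F G with rfl | hFG
        · rw [eps_self]; ring
        rcases eq_or_ne (Y F G) 0 with h0 | h0
        · rw [h0]; ring
        · have hH := hP2 F G hFG h0
          have hFf : F.1 ∈ X.dfaces k := hmemP hH Finset.subset_union_left F.2
          exact absurd (psd_row_zero hpsd F G (hdiag0 F hFf)) h0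
      rw [hoff0] at hoff
      exact lt_irrefl 0 hoff
    set Y'' : Matrix (KSet W k) (KSet W k) ℝ := t⁻¹ • Y' with hY''
    have htinv : 0 ≤ t⁻¹ := by positivity
    have hfeas : thetaFeasible (X'.compl k) k Y'' := by
      refine ⟨psd_smul htinv hY'psd, ?_, ?_, ?_, ?_⟩
      · rw [hY'', Matrix.trace_smul, htrY', smul_eq_mul]
        exact inv_mul_cancel₀ (ne_of_gt htpos)
      · intro A B hmem
        rw [hY'']
        simp only [Matrix.smul_apply, smul_eq_mul]
        rw [hY'z A B (Or.inl hmem), mul_zero]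
      · intro A B hge
        rw [hY'']
        simp only [Matrix.smul_apply, smul_eq_mul]
        rw [hY'z A B (Or.inr hge), mul_zero]
      · intro A B C D hu
        have hk := hkey A B C D hu
        rw [hY'']
        simp only [Matrix.smul_apply, smul_eq_mul]
        linear_combination t⁻¹ * hk
    have hsymY' : ∀ A B : KSet W k, Y' B A = Y' A B :=
      fun A B => psd_symm hY'psd B A
    have hval : Matrix.trace (Lc W k * Y'') = (k:ℝ) + t⁻¹ * off := by
      rw [trace_lc_decomp k Y'', hfeas.2.1, mul_one]
      congr 1
      calc ∑ A : KSet W k, ∑ B : KSet W k, eps A.1 B.1 * Y'' B A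
          = ∑ A : KSet W k, ∑ B : KSet W k, t⁻¹ * (eps A.1 B.1 * Y' A B) := by
            apply Finset.sum_congr rfl; intro A _
            apply Finset.sum_congr rfl; intro B _
            rw [hY'']
            simp only [Matrix.smul_apply, smul_eq_mul]
            rw [hsymY' A B]
            ring
        _ = t⁻¹ * ∑ A : KSet W k, ∑ B : KSet W k, eps A.1 B.1 * Y' A B := by
            rw [Finset.mul_sum]
            apply Finset.sum_congr rfl; intro A _
            rw [Finset.mul_sum]
        _ = t⁻¹ * off := by rw [hoffY']
    have hmem : ((k:ℝ) + t⁻¹ * off) ∈ {v | ∃ Z, thetaFeasible (X'.compl k) k Z ∧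
        Matrix.trace (Lc W k * Z) = v} := ⟨Y'', hfeas, hval⟩
    have hle := le_csSup (theta_bddAbove (X'.compl k) k) hmem
    have hmono : off ≤ t⁻¹ * off := by
      have h1 : (1:ℝ) ≤ t⁻¹ := by
        rw [le_inv_comm₀] <;> simp [htpos, ht1]
      nlinarith
    rw [hobjY]
    calc (k:ℝ) + off ≤ (k:ℝ) + t⁻¹ * off := by linarith
      _ ≤ theta (X'.compl k) k := hle

end MainStep


/-- If there is a homomorphism from a pure `k`-dimensional complex `X`
to a pure `k`-dimensional complex `X'`, then `ϑ_k(X̄) ≤ ϑ_k(X̄')`, where `X̄` denotes the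
complementary complex. In particular, a homomorphism from `X` to the complete complex
`K_ℓ^k` gives `ϑ_k(X̄) ≤ ℓ`. -/
theorem theta_compl_le_of_hom
    {V W : Type} [Fintype V] [DecidableEq V] [LinearOrder V]
    [Fintype W] [DecidableEq W] [LinearOrder W]
    (X : SC V) (X' : SC W) (k : ℕ) (hk : 1 ≤ k)
    (hX : X.Pure k) (hX' : X'.Pure k) (hne : (X.dfaces (k + 1)).Nonempty)
    (f : Finset V → Finset W) (hf : IsHom X X' k f) :
    theta (X.compl k) k ≤ theta (X'.compl k) k ∧
    ∀ ℓ : ℕ, k ≤ ℓ → ∀ g : Finset V → Finset (Fin ℓ),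
      IsHom X (completeComplex (Fin ℓ) k) k g → theta (X.compl k) k ≤ (ℓ : ℝ) := by
  obtain ⟨H0, hH0⟩ := hne
  have hk' : (1:ℝ) ≤ (k:ℝ) := by exact_mod_cast hk
  have hKW : Nonempty (KSet W k) := by
    obtain ⟨_, s, s', _, _, hhom⟩ := hf
    obtain ⟨H', hH', _⟩ := hhom H0 hH0
    obtain ⟨T, _, hTc⟩ := Finset.exists_subset_card_eq (s := H') (n := k)
      (by rw [dfaces_card hH']; omega)
    exact ⟨⟨T, hTc⟩⟩
  constructor
  · apply Real.sSup_le
    · rintro v ⟨Y, hYf, rfl⟩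
      exact main_step X X' k f hf hKW Y hYf
    · have := k_le_theta X' k hKW
      linarith
  · intro ℓ hℓ g hg
    have hK2 : Nonempty (KSet (Fin ℓ) k) := by
      obtain ⟨_, s, s', _, _, hhom⟩ := hg
      obtain ⟨H', hH', _⟩ := hhom H0 hH0
      obtain ⟨T, _, hTc⟩ := Finset.exists_subset_card_eq (s := H') (n := k)
        (by rw [dfaces_card hH']; omega)
      exact ⟨⟨T, hTc⟩⟩
    have h1 : theta (X.compl k) k
        ≤ theta ((completeComplex (Fin ℓ) k).compl k) k := by
      apply Real.sSup_le
      · rintro v ⟨Y, hYf, rfl⟩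
        exact main_step X (completeComplex (Fin ℓ) k) k g hg hK2 Y hYf
      · have := k_le_theta (completeComplex (Fin ℓ) k) k hK2
        linarith
    have h2 : theta ((completeComplex (Fin ℓ) k).compl k) k ≤ (ℓ : ℝ) := by
      have := theta_le_card ((completeComplex (Fin ℓ) k).compl k) k
      rwa [Fintype.card_fin] at this
    exact h1.trans h2
end
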